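/- arXiv:2307.12456 — 4 statements merged into one kernel-verified Lean document; each statement's English description precedes it below -/
import Mathlib

section
/- With the Bayesian linear regression posterior covariance S_N = (α I + β Φᵀ Φ)⁻¹ and predictive variance σ²_N(x) = β⁻¹ + φ(x)ᵀ S_N φ(x), the difference in predictive variances upon removing the n-th training point satisfies σ²_{N\n}(x) - σ²_N(x) = (φ(x)ᵀ S_N φ(xₙ))² / (β⁻¹ - φ(xₙ)ᵀ S_N φ(xₙ)). -/
open Matrix

lemma my_vecMulVec_mul {n p : Type*} [Fintype n] (v : n → ℝ) (w : n → ℝ)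
    (M : Matrix n p ℝ) : vecMulVec v w * M = vecMulVec v (w ᵥ* M) := by
  ext i j
  simp [mul_apply, vecMulVec_apply, vecMul, dotProduct, Finset.mul_sum, mul_assoc]

lemma my_mul_vecMulVec {n p : Type*} [Fintype n] (M : Matrix p n ℝ) (v : n → ℝ)
    (w : n → ℝ) : M * vecMulVec v w = vecMulVec (M *ᵥ v) w := by
  ext i j
  simp [mul_apply, vecMulVec_apply, mulVec, dotProduct, Finset.sum_mul, mul_assoc]

lemma my_vecMulVec_mul_vecMulVec {n : Type*} [Fintype n] (a b c d : n → ℝ) :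
    vecMulVec a b * vecMulVec c d = (b ⬝ᵥ c) • vecMulVec a d := by
  ext i j
  simp only [mul_apply, vecMulVec_apply, Matrix.smul_apply, smul_eq_mul, dotProduct,
    Finset.sum_mul, Finset.mul_sum]
  apply Finset.sum_congr rfl
  intro k _; ring

lemma my_dotProduct_vecMulVec {n : Type*} [Fintype n] (x a b y : n → ℝ) :
    x ⬝ᵥ (vecMulVec a b) *ᵥ y = (x ⬝ᵥ a) * (b ⬝ᵥ y) := by
  simp only [dotProduct, mulVec, vecMulVec_apply, Finset.sum_mul, Finset.mul_sum]
  rw [Finset.sum_comm]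
  apply Finset.sum_congr rfl
  intro k _
  apply Finset.sum_congr rfl
  intro l _; ring

/-- Leave-one-out predictive variance difference in Bayesian linear regression:
`σ²_{N\n}(x) - σ²_N(x) = (φ(x)ᵀ S_N φ(xₙ))² / (β⁻¹ - φ(xₙ)ᵀ S_N φ(xₙ))`. -/
theorem predictive_variance_difference (N d : ℕ) (α β : ℝ) (hα : 0 < α) (hβ : 0 < β)
    (Φ : Matrix (Fin N) (Fin d) ℝ) (n : Fin N) (φx : Fin d → ℝ)
    (SN : Matrix (Fin d) (Fin d) ℝ)
    (hSN : SN = (α • (1 : Matrix (Fin d) (Fin d) ℝ) + β • (Φᵀ * Φ))⁻¹)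
    (SNn : Matrix (Fin d) (Fin d) ℝ)
    (hSNn : SNn = (α • (1 : Matrix (Fin d) (Fin d) ℝ) + β • (Φᵀ * Φ)
        - β • Matrix.vecMulVec (Φ n) (Φ n))⁻¹)
    (hω : 0 < β⁻¹ - (Φ n) ⬝ᵥ SN *ᵥ (Φ n)) :
    (β⁻¹ + φx ⬝ᵥ SNn *ᵥ φx) - (β⁻¹ + φx ⬝ᵥ SN *ᵥ φx)
      = (φx ⬝ᵥ SN *ᵥ (Φ n)) ^ 2 / (β⁻¹ - (Φ n) ⬝ᵥ SN *ᵥ (Φ n)) := by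
  set A : Matrix (Fin d) (Fin d) ℝ := α • (1 : Matrix (Fin d) (Fin d) ℝ) + β • (Φᵀ * Φ) with hA
  set v : Fin d → ℝ := Φ n with hv
  -- A is positive definite
  have hA1 : (α • (1 : Matrix (Fin d) (Fin d) ℝ)).PosDef := by
    refine posDef_iff_dotProduct_mulVec.mpr ⟨?_, fun x hx => ?_⟩
    · ext i j
      simp [Matrix.conjTranspose_apply, Matrix.one_apply, eq_comm]
    · have h1 : (α • (1 : Matrix (Fin d) (Fin d) ℝ)) *ᵥ x = α • x := by
        simp [Matrix.smul_mulVec]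
      rw [h1]
      have hxx : 0 < star x ⬝ᵥ x := by
        have := dotProduct_star_self_pos_iff (R := ℝ) (v := x)
        simpa [dotProduct_comm] using this.mpr hx
      have h2 : star x ⬝ᵥ (α • x) = α * (star x ⬝ᵥ x) := by
        simp [dotProduct_smul]
      rw [h2]
      positivity
  have hA2 : (β • (Φᵀ * Φ)).PosSemidef := by
    have h := Matrix.posSemidef_conjTranspose_mul_self (R := ℝ) Φ
    have hΦ : Φᴴ = Φᵀ := rfl
    rw [hΦ] at h
    refine posSemidef_iff_dotProduct_mulVec.mpr ⟨?_, fun x => ?_⟩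
    · show (β • (Φᵀ * Φ))ᴴ = _
      rw [Matrix.conjTranspose_smul, h.1.eq]
      norm_num
    · have := (posSemidef_iff_dotProduct_mulVec.mp h).2 x
      rw [Matrix.smul_mulVec, dotProduct_smul]
      have : (0:ℝ) ≤ star x ⬝ᵥ (Φᵀ * Φ) *ᵥ x := (posSemidef_iff_dotProduct_mulVec.mp h).2 x
      simp only [smul_eq_mul]
      positivity
  have hApd : A.PosDef := hA1.add_posSemidef hA2
  have hAunit : IsUnit A.det := (Matrix.isUnit_iff_isUnit_det A).mp hApd.isUnit
  have hAS : A * SN = 1 := by rw [hSN]; exact Matrix.mul_nonsing_inv A hAunit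
  have hSA : SN * A = 1 := by rw [hSN]; exact Matrix.nonsing_inv_mul A hAunit
  -- symmetry of SN
  have hAT : Aᵀ = A := by
    rw [hA]
    simp [Matrix.transpose_add, Matrix.transpose_smul, Matrix.transpose_mul]
  have hST : SNᵀ = SN := by
    rw [hSN, Matrix.transpose_nonsing_inv, hAT]
  -- quantities
  set t : ℝ := v ⬝ᵥ SN *ᵥ v with ht
  set s : ℝ := φx ⬝ᵥ SN *ᵥ v with hs
  have hβne : β ≠ 0 := ne_of_gt hβ
  have hden : 0 < 1 - β * t := by
    have h1 := mul_pos hβ hω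
    have h2 : β * (β⁻¹ - t) = 1 - β * t := by field_simp
    linarith [h2 ▸ h1]
  have hdenne : 1 - β * t ≠ 0 := ne_of_gt hden
  set c : ℝ := β / (1 - β * t) with hc
  set V : Matrix (Fin d) (Fin d) ℝ := vecMulVec v v with hV
  -- Sherman-Morrison
  have hVSV : V * SN * V = t • V := by
    rw [hV, my_vecMulVec_mul, my_vecMulVec_mul_vecMulVec]
    congr 1
    rw [ht, Matrix.dotProduct_mulVec]
  have key : (A - β • V) * (SN + c • (SN * V * SN)) = 1 := by
    have e1 : A * (SN * V * SN) = V * SN := by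
      rw [← Matrix.mul_assoc, ← Matrix.mul_assoc, hAS, Matrix.one_mul]
    have e2 : V * (SN * V * SN) = t • (V * SN) := by
      rw [← Matrix.mul_assoc, ← Matrix.mul_assoc, hVSV, Matrix.smul_mul]
    rw [Matrix.sub_mul, Matrix.mul_add, Matrix.mul_add, hAS,
      Matrix.mul_smul, e1, Matrix.smul_mul, Matrix.smul_mul, Matrix.mul_smul, e2]
    have hcoef : c - β - β * (c * t) = 0 := by
      rw [hc]; field_simp; ring
    have hz : c • (V * SN) - (β • (V * SN) + β • c • t • (V * SN)) = 0 := by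
      calc c • (V * SN) - (β • (V * SN) + β • c • t • (V * SN))
          = (c - β - β * (c * t)) • (V * SN) := by module
        _ = 0 := by rw [hcoef, zero_smul]
    have : 1 + c • (V * SN) - (β • (V * SN) + β • c • t • (V * SN))
        = 1 + (c • (V * SN) - (β • (V * SN) + β • c • t • (V * SN))) := by abel
    rw [this, hz, add_zero]
  have hSNn2 : SNn = SN + c • (SN * V * SN) := by
    rw [hSNn]
    exact Matrix.inv_eq_right_inv key
  -- final computation
  have hquad : φx ⬝ᵥ (SN * V * SN) *ᵥ φx = s * s := by
    rw [hV, my_mul_vecMulVec, my_vecMulVec_mul, my_dotProduct_vecMulVec]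
    have h1 : v ᵥ* SN = SN *ᵥ v := by
      conv_lhs => rw [← hST]
      rw [Matrix.vecMul_transpose]
    rw [h1, hs, dotProduct_comm (SN *ᵥ v) φx]
  have hLHS : φx ⬝ᵥ SNn *ᵥ φx = φx ⬝ᵥ SN *ᵥ φx + c * (s * s) := by
    rw [hSNn2, Matrix.add_mulVec, dotProduct_add, Matrix.smul_mulVec,
      dotProduct_smul, smul_eq_mul, hquad]
  rw [hLHS]
  have hωne : β⁻¹ - t ≠ 0 := ne_of_gt hω
  rw [hc]
  field_simp
  ring
end

section
/- Let W, Z₁,…,Z_N, Z be finite-valued random variables with joint law p(w) p(z|w) ∏_{n=1}^N p(zₙ|w), i.e., Z₁,…,Z_N, Z are conditionally i.i.d. given W. Then I(W; Z | Z^N) = (1/N) I(W; Z^N) - (1/N) Σ_{n=1}^N I(Z; Zₙ | Z^{N\n}) - (1/N) Σ_{n'=1}^{N-1} Σ_{n=n'}^{N-1} I(Z_{n+1}; Zₙ | Z^{n-1}), where Z^{N\n} denotes all training variables except Zₙ and Z^{n-1} = (Z₁,…,Z_{n-1}). -/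
open Finset

/-- Probability that a finite-valued random variable `X` on the finite
sample space `Ω` (with pmf `p`) takes the value `x`. -/
noncomputable def probOf {Ω α : Type*} [Fintype Ω] [DecidableEq α]
    (p : Ω → ℝ) (X : Ω → α) (x : α) : ℝ :=
  ∑ ω, if X ω = x then p ω else 0

/-- Shannon entropy (natural logarithm) of a finite-valued random variable. -/
noncomputable def entropy {Ω α : Type*} [Fintype Ω] [Fintype α] [DecidableEq α]
    (p : Ω → ℝ) (X : Ω → α) : ℝ :=
  -∑ x, probOf p X x * Real.log (probOf p X x)

/-- Conditional Shannon entropy `H(X | Y)`. -/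
noncomputable def condEntropy {Ω α β : Type*} [Fintype Ω] [Fintype α] [DecidableEq α]
    [Fintype β] [DecidableEq β] (p : Ω → ℝ) (X : Ω → α) (Y : Ω → β) : ℝ :=
  entropy p (fun ω => (X ω, Y ω)) - entropy p Y

/-- Mutual information `I(X; Y)`. -/
noncomputable def mutualInfo {Ω α β : Type*} [Fintype Ω] [Fintype α] [DecidableEq α]
    [Fintype β] [DecidableEq β] (p : Ω → ℝ) (X : Ω → α) (Y : Ω → β) : ℝ :=
  entropy p X + entropy p Y - entropy p (fun ω => (X ω, Y ω))

/-- Conditional mutual information `I(X; Y | Z)`. -/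
noncomputable def condMI {Ω α β γ : Type*} [Fintype Ω] [Fintype α] [DecidableEq α]
    [Fintype β] [DecidableEq β] [Fintype γ] [DecidableEq γ]
    (p : Ω → ℝ) (X : Ω → α) (Y : Ω → β) (Z : Ω → γ) : ℝ :=
  condEntropy p X Z + condEntropy p Y Z - condEntropy p (fun ω => (X ω, Y ω)) Z

/-- `p` is a probability mass function. -/
def IsPMF {Ω : Type*} [Fintype Ω] (p : Ω → ℝ) : Prop :=
  (∀ ω, 0 ≤ p ω) ∧ ∑ ω, p ω = 1

set_option linter.unusedSectionVars false
set_option linter.unusedVariables false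
set_option maxHeartbeats 1000000

noncomputable def ent {α : Type*} [Fintype α] (f : α → ℝ) : ℝ := -∑ x, f x * Real.log (f x)

lemma entropy_eq_ent {Ω α : Type*} [Fintype Ω] [Fintype α] [DecidableEq α]
    (p : Ω → ℝ) (X : Ω → α) : entropy p X = ent (probOf p X) := rfl

lemma mul_log_mul (x y : ℝ) : x * y * Real.log (x * y) = x * y * Real.log x + x * y * Real.log y := by
  rcases eq_or_ne x 0 with rfl | hx; · simp
  rcases eq_or_ne y 0 with rfl | hy; · simp
  rw [Real.log_mul hx hy]; ring

lemma ent_comp_inj {α β : Type*} [Fintype α] [Fintype β] [DecidableEq β] (e : α → β)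
    (he : Function.Injective e) (g : β → ℝ) (h0 : ∀ b, (∀ a, e a ≠ b) → g b = 0) :
    ent g = ent (fun a => g (e a)) := by
  unfold ent
  congr 1
  have h1 : ∑ b ∈ Finset.univ.image e, g b * Real.log (g b)
      = ∑ a, g (e a) * Real.log (g (e a)) :=
    Finset.sum_image (fun x _ y _ h => he h)
  have h2 : ∑ b : β, g b * Real.log (g b)
      = ∑ b ∈ Finset.univ.image e, g b * Real.log (g b) := by
    symm
    apply Finset.sum_subset (Finset.subset_univ _)
    intro b _ hb
    have : ∀ a, e a ≠ b := by
      intro a ha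
      exact hb (Finset.mem_image.2 ⟨a, Finset.mem_univ a, ha⟩)
    rw [h0 b this]; simp
  rw [h2, h1]

lemma probOf_comp_inj {Ω α β : Type*} [Fintype Ω] [DecidableEq α] [DecidableEq β]
    (p : Ω → ℝ) (X : Ω → α) (e : α → β) (he : Function.Injective e) (a : α) :
    probOf p (fun ω => e (X ω)) (e a) = probOf p X a := by
  unfold probOf
  refine Finset.sum_congr rfl fun ω _ => ?_
  simp [he.eq_iff]

lemma entropy_comp_inj {Ω α β : Type*} [Fintype Ω] [Fintype α] [DecidableEq α]
    [Fintype β] [DecidableEq β]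
    (p : Ω → ℝ) (X : Ω → α) (e : α → β) (he : Function.Injective e) :
    entropy p (fun ω => e (X ω)) = entropy p X := by
  rw [entropy_eq_ent, entropy_eq_ent,
    ent_comp_inj e he (probOf p (fun ω => e (X ω))) ?_]
  · congr 1; funext a; rw [probOf_comp_inj p X e he]
  · intro b hb
    unfold probOf
    refine Finset.sum_eq_zero fun ω _ => ?_
    rw [if_neg (hb (X ω))]

lemma ent_comp_equiv {α β : Type*} [Fintype α] [Fintype β] (e : α ≃ β) (g : β → ℝ) :
    ent g = ent (fun a => g (e a)) := by
  unfold ent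
  congr 1
  exact (Fintype.sum_equiv e _ _ (fun a => rfl)).symm

lemma ent_mul {α β : Type*} [Fintype α] [Fintype β] (f : α → ℝ) (g : α → β → ℝ)
    (hg : ∀ a, ∑ b, g a b = 1) :
    ent (fun x : α × β => f x.1 * g x.1 x.2) = ent f + ∑ a, f a * ent (g a) := by
  unfold ent
  rw [Fintype.sum_prod_type]
  have : ∀ a : α, ∑ b, f a * g a b * Real.log (f a * g a b)
      = f a * Real.log (f a) + f a * ∑ b, g a b * Real.log (g a b) := by
    intro a
    have : ∀ b, f a * g a b * Real.log (f a * g a b)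
        = (f a * Real.log (f a)) * g a b + f a * (g a b * Real.log (g a b)) := by
      intro b
      rw [mul_log_mul]; ring
    rw [Finset.sum_congr rfl fun b _ => this b, Finset.sum_add_distrib,
      ← Finset.mul_sum, ← Finset.mul_sum, hg, mul_one]
  rw [Finset.sum_congr rfl fun a _ => this a, Finset.sum_add_distrib]
  simp only [mul_neg, Finset.sum_neg_distrib]
  ring


section PiLemmas
variable {𝓩 : Type*} [Fintype 𝓩] [DecidableEq 𝓩]
lemma sum_prod_pi {J : Type*} [Fintype J] [DecidableEq J] (f : J → 𝓩 → ℝ) :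
    ∑ z : J → 𝓩, ∏ j, f j (z j) = ∏ j, ∑ ζ, f j ζ := by
  rw [Finset.prod_univ_sum (fun _ => (Finset.univ : Finset 𝓩)) f]
  rw [Fintype.piFinset_univ]

lemma sum_restrict_eq {I J : Type*} [Fintype I] [DecidableEq I] [Fintype J] [DecidableEq J]
    (ι : J → I) (hι : Function.Injective ι) (f : I → 𝓩 → ℝ) (hf : ∀ i, ∑ ζ, f i ζ = 1)
    (z : J → 𝓩) :
    ∑ ω : I → 𝓩, (if (fun j => ω (ι j)) = z then ∏ i, f i (ω i) else 0)
      = ∏ j, f (ι j) (z j) := by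
  classical
  set S : Set I := Set.range ι with hS
  haveI : DecidablePred (· ∈ S) := Classical.decPred _
  let eJ : J ≃ ↥S := Equiv.ofInjective ι hι
  let E : J ⊕ ↥Sᶜ ≃ I := (eJ.sumCongr (Equiv.refl _)).trans (Equiv.Set.sumCompl S)
  have hEinl : ∀ j, E (Sum.inl j) = ι j := by
    intro j
    simp only [E, eJ, Equiv.trans_apply, Equiv.sumCongr_apply, Sum.map_inl,
      Equiv.Set.sumCompl_apply_inl]
    rfl
  let Φ : ((J → 𝓩) × (↥Sᶜ → 𝓩)) ≃ (I → 𝓩) :=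
    (Equiv.sumArrowEquivProdArrow J ↥Sᶜ 𝓩).symm.trans (Equiv.arrowCongr E (Equiv.refl 𝓩))
  have hΦ : ∀ (u : J → 𝓩) (v : ↥Sᶜ → 𝓩) (s : J ⊕ ↥Sᶜ),
      Φ (u, v) (E s) = Sum.elim u v s := by
    intro u v s
    simp [Φ, Equiv.arrowCongr, Equiv.sumArrowEquivProdArrow]
  rw [← Fintype.sum_equiv Φ
    (fun uv => if (fun j => Φ uv (ι j)) = z then ∏ i, f i (Φ uv i) else 0)
    _ (fun uv => rfl)]
  have key : ∀ uv : (J → 𝓩) × (↥Sᶜ → 𝓩),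
      (if (fun j => Φ uv (ι j)) = z then ∏ i, f i (Φ uv i) else 0)
      = (if uv.1 = z then (∏ j, f (ι j) (uv.1 j)) * ∏ k : ↥Sᶜ, f k.val (uv.2 k) else 0) := by
    rintro ⟨u, v⟩
    have h1 : (fun j => Φ (u, v) (ι j)) = u := by
      funext j
      rw [← hEinl j, hΦ]
      rfl
    have h2 : ∏ i, f i (Φ (u, v) i)
        = (∏ j, f (ι j) (u j)) * ∏ k : ↥Sᶜ, f k.val (v k) := by
      rw [← Fintype.prod_equiv E (fun s => f (E s) (Φ (u,v) (E s))) _ (fun s => rfl),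
        Fintype.prod_sum_type]
      congr 1
      · exact Finset.prod_congr rfl fun j _ => by rw [hΦ, hEinl]; rfl
      · refine Finset.prod_congr rfl fun k _ => by
          rw [hΦ]
          have : E (Sum.inr k) = (k.val : I) := by
            simp [E, Equiv.Set.sumCompl_apply_inr]
          rw [this]
          rfl
    rw [h1, h2]
  rw [Fintype.sum_congr _ _ key]
  rw [Fintype.sum_prod_type]
  have swap : ∀ x : J → 𝓩,
      (∑ y : ↥Sᶜ → 𝓩, if x = z then (∏ j, f (ι j) (x j)) * ∏ k : ↥Sᶜ, f k.val (y k) else 0)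
      = if x = z then ∑ y : ↥Sᶜ → 𝓩, (∏ j, f (ι j) (x j)) * ∏ k : ↥Sᶜ, f k.val (y k) else 0 := by
    intro x; by_cases h : x = z <;> simp [h]
  rw [Finset.sum_congr rfl fun x _ => swap x]
  rw [Finset.sum_ite_eq' Finset.univ z
    (fun u => ∑ v : ↥Sᶜ → 𝓩, (∏ j, f (ι j) (u j)) * ∏ k : ↥Sᶜ, f k.val (v k))]
  rw [if_pos (Finset.mem_univ z), ← Finset.mul_sum, sum_prod_pi]
  have : ∀ k : ↥Sᶜ, ∑ ζ, f k.val ζ = 1 := fun k => hf k.val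
  rw [Finset.prod_congr rfl fun k _ => this k, Finset.prod_const_one, mul_one]
end PiLemmas

section
variable {𝓦 𝓩 : Type*} [Fintype 𝓦] [DecidableEq 𝓦] [Fintype 𝓩] [DecidableEq 𝓩]

noncomputable def mDist (π : 𝓦 → ℝ) (q : 𝓦 → 𝓩 → ℝ) (J : Type*) [Fintype J] :
    (J → 𝓩) → ℝ := fun z => ∑ w, π w * ∏ j, q w (z j)

noncomputable def MDist (π : 𝓦 → ℝ) (q : 𝓦 → 𝓩 → ℝ) (J : Type*) [Fintype J] :
    𝓦 × (J → 𝓩) → ℝ := fun x => π x.1 * ∏ j, q x.1 (x.2 j)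

variable (π : 𝓦 → ℝ) (q : 𝓦 → 𝓩 → ℝ)

lemma mDist_equiv {J J' : Type*} [Fintype J] [DecidableEq J] [Fintype J'] [DecidableEq J'] (σ : J ≃ J') :
    ent (mDist π q J) = ent (mDist π q J') := by
  rw [ent_comp_equiv (Equiv.arrowCongr σ (Equiv.refl 𝓩)) (mDist π q J')]
  congr 1
  funext z
  unfold mDist
  refine Finset.sum_congr rfl fun w _ => ?_
  congr 1
  refine ((Equiv.prod_comp σ.symm fun j => q w (z j)).symm.trans ?_)
  refine Finset.prod_congr rfl fun j' _ => ?_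
  simp [Equiv.arrowCongr]

lemma MDist_equiv {J J' : Type*} [Fintype J] [DecidableEq J] [Fintype J'] [DecidableEq J'] (σ : J ≃ J') :
    ent (MDist π q J) = ent (MDist π q J') := by
  rw [ent_comp_equiv (Equiv.prodCongr (Equiv.refl 𝓦) (Equiv.arrowCongr σ (Equiv.refl 𝓩)))
    (MDist π q J')]
  congr 1
  funext x
  unfold MDist
  congr 1
  refine ((Equiv.prod_comp σ.symm fun j => q x.1 (x.2 j)).symm.trans ?_)
  refine Finset.prod_congr rfl fun j' _ => ?_
  simp [Equiv.arrowCongr, Equiv.prodCongr]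

lemma iid_ent (f : 𝓩 → ℝ) (hf : ∑ ζ, f ζ = 1) (k : ℕ) :
    ent (fun z : Fin k → 𝓩 => ∏ j, f (z j)) = k * ent f := by
  induction k with
  | zero =>
    have : (fun z : Fin 0 → 𝓩 => ∏ j, f (z j)) = fun _ => 1 := by
      funext z; simp
    rw [this]
    simp [ent]
  | succ k ih =>
    set e : 𝓩 × (Fin k → 𝓩) → (Fin (k+1) → 𝓩) := fun x => Fin.cons x.1 x.2 with he
    have hinj : Function.Injective e := by
      rintro ⟨a, b⟩ ⟨c, d⟩ h
      have h0 : a = c := by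
        have := congrFun h 0
        simpa [he] using this
      have h1 : b = d := by
        funext i
        have := congrFun h i.succ
        simpa [he] using this
      simp [h0, h1]
    rw [ent_comp_inj e hinj (fun z : Fin (k+1) → 𝓩 => ∏ j, f (z j))
      (fun b hb => absurd (Fin.cons_self_tail b) (hb (b 0, Fin.tail b)))]
    have hstep : (fun a : 𝓩 × (Fin k → 𝓩) => ∏ j, f (e a j))
        = fun a : 𝓩 × (Fin k → 𝓩) => f a.1 * ∏ j, f (a.2 j) := by
      funext a
      rw [Fin.prod_univ_succ]
      simp [he]
    rw [hstep]
    refine (ent_mul f (fun (_ : 𝓩) (z : Fin k → 𝓩) => ∏ j, f (z j))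
      (fun _ => by rw [sum_prod_pi]; simp [hf])).trans ?_
    rw [Finset.sum_congr rfl fun a _ => by rw [ih]]
    rw [← Finset.sum_mul, hf]
    push_cast
    ring

lemma bEnt_eq (hπ1 : ∑ w, π w = 1) (hq1 : ∀ w, ∑ ζ, q w ζ = 1) (k : ℕ) :
    ent (MDist π q (Fin k)) = ent π + k * ∑ w, π w * ent (q w) := by
  unfold MDist
  refine (ent_mul π (fun (w : 𝓦) (z : Fin k → 𝓩) => ∏ j, q w (z j))
    (fun w => by rw [sum_prod_pi]; simp [hq1 w])).trans ?_
  congr 1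
  rw [Finset.mul_sum]
  refine Finset.sum_congr rfl fun w _ => ?_
  rw [iid_ent (q w) (hq1 w) k]
  ring

lemma aEnt_zero (hπ1 : ∑ w, π w = 1) : ent (mDist π q (Fin 0)) = 0 := by
  have : mDist π q (Fin 0) = fun _ => 1 := by
    funext z; unfold mDist; simp [hπ1]
  rw [this]
  simp [ent]
end

lemma telescope (c : ℕ → ℝ) (M : ℕ) :
    ∑ n ∈ Finset.Icc 1 M, (n : ℝ) * (2 * c n - c (n + 1) - c (n - 1))
      = (M + 1 : ℝ) * c M - (M : ℝ) * c (M + 1) - c 0 := by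
  induction M with
  | zero => simp
  | succ M ih =>
    rw [Finset.sum_Icc_succ_top (by omega : 1 ≤ M + 1), ih]
    have : (M + 1) - 1 = M := by omega
    rw [this]
    push_cast
    ring

lemma swap_sum (F : ℕ → ℝ) (M : ℕ) :
    ∑ n' ∈ Finset.Icc 1 M, ∑ n ∈ Finset.Icc n' M, F n
      = ∑ n ∈ Finset.Icc 1 M, (n : ℝ) * F n := by
  rw [Finset.sum_comm' (t' := Finset.Icc 1 M) (s' := fun n => Finset.Icc 1 n)
    (by intro x y; simp only [Finset.mem_Icc]; omega)]
  refine Finset.sum_congr rfl fun n _ => ?_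
  rw [Finset.sum_const, Nat.card_Icc]
  simp [nsmul_eq_mul]


section Dmain
variable {𝓦 𝓩 : Type*} [Fintype 𝓦] [DecidableEq 𝓦] [Fintype 𝓩] [DecidableEq 𝓩]
variable (N : ℕ) (π : 𝓦 → ℝ) (q : 𝓦 → 𝓩 → ℝ)
variable (hq1 : ∀ w, ∑ ζ, q w ζ = 1)
variable (p : 𝓦 × (Fin (N + 1) → 𝓩) → ℝ)
variable (hp : p = fun ωf => π ωf.1 * ∏ i, q ωf.1 (ωf.2 i))

include hq1 hp

lemma probOf_tuple {J : Type*} [Fintype J] [DecidableEq J]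
    (ι : J → Fin (N + 1)) (hι : Function.Injective ι) :
    probOf p (fun ωf => fun j => ωf.2 (ι j)) = mDist π q J := by
  funext z
  unfold probOf
  rw [hp, Fintype.sum_prod_type]
  unfold mDist
  refine Finset.sum_congr rfl fun w _ => ?_
  have : ∀ ω : Fin (N + 1) → 𝓩,
      (if (fun j => ω (ι j)) = z then π w * ∏ i, q w (ω i) else 0)
      = π w * (if (fun j => ω (ι j)) = z then ∏ i, q w (ω i) else 0) := by
    intro ω; by_cases h : (fun j => ω (ι j)) = z <;> simp [h]
  rw [Finset.sum_congr rfl fun ω _ => this ω, ← Finset.mul_sum,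
    sum_restrict_eq ι hι (fun _ => q w) (fun _ => hq1 w) z]

lemma probOf_tupleW {J : Type*} [Fintype J] [DecidableEq J]
    (ι : J → Fin (N + 1)) (hι : Function.Injective ι) :
    probOf p (fun ωf => (ωf.1, fun j => ωf.2 (ι j))) = MDist π q J := by
  funext x
  obtain ⟨w, z⟩ := x
  unfold probOf
  rw [hp, Fintype.sum_prod_type]
  have inner : ∀ w' : 𝓦,
      (∑ ω : Fin (N+1) → 𝓩, if ((w', fun j => ω (ι j)) : 𝓦 × (J → 𝓩)) = (w, z)
        then π w' * ∏ i, q w' (ω i) else 0)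
      = if w' = w then π w' * ∏ j, q w' (z j) else 0 := by
    intro w'
    by_cases hw : w' = w
    · subst hw
      simp only [Prod.mk.injEq, true_and]
      have : ∀ ω : Fin (N + 1) → 𝓩,
          (if (fun j => ω (ι j)) = z then π w' * ∏ i, q w' (ω i) else 0)
          = π w' * (if (fun j => ω (ι j)) = z then ∏ i, q w' (ω i) else 0) := by
        intro ω; by_cases h : (fun j => ω (ι j)) = z <;> simp [h]
      rw [Finset.sum_congr rfl fun ω _ => this ω, ← Finset.mul_sum,
        sum_restrict_eq ι hι (fun _ => q w') (fun _ => hq1 w') z]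
      simp
    · rw [if_neg hw]
      refine Finset.sum_eq_zero fun ω _ => ?_
      rw [if_neg]
      simp [hw]
  rw [Finset.sum_congr rfl fun w' _ => inner w', Finset.sum_ite_eq' Finset.univ w
    (fun w' => π w' * ∏ j, q w' (z j)), if_pos (Finset.mem_univ w)]
  rfl
end Dmain

section Helpers
variable {𝓦 𝓩 : Type*} [Fintype 𝓦] [DecidableEq 𝓦] [Fintype 𝓩] [DecidableEq 𝓩]
variable (N : ℕ) (π : 𝓦 → ℝ) (q : 𝓦 → 𝓩 → ℝ)
variable (hq1 : ∀ w, ∑ ζ, q w ζ = 1)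
variable (p : 𝓦 × (Fin (N + 1) → 𝓩) → ℝ)
variable (hp : p = fun ωf => π ωf.1 * ∏ i, q ωf.1 (ωf.2 i))

include hq1 hp

lemma H_tuple {J : Type*} [Fintype J] [DecidableEq J]
    (ι : J → Fin (N + 1)) (hι : Function.Injective ι) :
    entropy p (fun ωf => fun j => ωf.2 (ι j)) = ent (mDist π q (Fin (Fintype.card J))) := by
  rw [entropy_eq_ent, probOf_tuple N π q hq1 p hp ι hι,
    mDist_equiv π q (Fintype.equivFin J)]

lemma H_tupleW {J : Type*} [Fintype J] [DecidableEq J]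
    (ι : J → Fin (N + 1)) (hι : Function.Injective ι) :
    entropy p (fun ωf => (ωf.1, fun j => ωf.2 (ι j))) = ent (MDist π q (Fin (Fintype.card J))) := by
  rw [entropy_eq_ent, probOf_tupleW N π q hq1 p hp ι hι,
    MDist_equiv π q (Fintype.equivFin J)]

lemma H_W : entropy p (fun ωf => ωf.1) = ent (MDist π q (Fin 0)) := by
  have he : Function.Injective (fun w : 𝓦 => ((w, fun j : Fin 0 => j.elim0) : 𝓦 × (Fin 0 → 𝓩))) := by
    intro a b h
    exact congrArg Prod.fst h
  have h1 := entropy_comp_inj p (fun ωf : 𝓦 × (Fin (N+1) → 𝓩) => ωf.1) _ he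
  rw [← h1]
  have h2 : (fun ωf : 𝓦 × (Fin (N+1) → 𝓩) => ((ωf.1, fun j : Fin 0 => j.elim0) : 𝓦 × (Fin 0 → 𝓩)))
      = fun ωf => (ωf.1, fun j : Fin 0 => ωf.2 (j.elim0)) := by
    funext ωf
    refine Prod.ext rfl ?_
    funext j
    exact j.elim0
  rw [h2, H_tupleW N π q hq1 p hp (fun j : Fin 0 => j.elim0) (fun a => a.elim0)]
  rfl

lemma H_pair1 {J : Type*} [Fintype J] [DecidableEq J]
    (ι : J → Fin (N + 1)) (i0 : Fin (N + 1))
    (hκ : Function.Injective (fun o : Option J => o.elim i0 ι)) :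
    entropy p (fun ωf => (ωf.2 i0, fun j : J => ωf.2 (ι j)))
      = ent (mDist π q (Fin (Fintype.card J + 1))) := by
  have he : Function.Injective
      (fun x : 𝓩 × (J → 𝓩) => (fun o : Option J => o.elim x.1 x.2)) := by
    intro a b h
    refine Prod.ext (congrFun h none) (funext fun j => congrFun h (some j))
  have h1 := entropy_comp_inj p
    (fun ωf : 𝓦 × (Fin (N+1) → 𝓩) => (ωf.2 i0, fun j : J => ωf.2 (ι j))) _ he
  rw [← h1]
  have h2 : (fun ωf : 𝓦 × (Fin (N+1) → 𝓩) =>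
        (fun o : Option J => o.elim (ωf.2 i0) (fun j => ωf.2 (ι j))))
      = fun ωf => fun o : Option J => ωf.2 (o.elim i0 ι) := by
    funext ωf o
    cases o <;> rfl
  rw [h2, H_tuple N π q hq1 p hp (fun o : Option J => o.elim i0 ι) hκ]
  rw [show Fintype.card (Option J) = Fintype.card J + 1 from Fintype.card_option]

lemma H_pair2 {J : Type*} [Fintype J] [DecidableEq J]
    (ι : J → Fin (N + 1)) (i0 i1 : Fin (N + 1))
    (hκ : Function.Injective
      (fun o : Option (Option J) => o.elim i0 (fun o' => o'.elim i1 ι))) :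
    entropy p (fun ωf => ((ωf.2 i0, ωf.2 i1), fun j : J => ωf.2 (ι j)))
      = ent (mDist π q (Fin (Fintype.card J + 1 + 1))) := by
  have he : Function.Injective
      (fun x : (𝓩 × 𝓩) × (J → 𝓩) =>
        (fun o : Option (Option J) => o.elim x.1.1 (fun o' => o'.elim x.1.2 x.2))) := by
    intro a b h
    refine Prod.ext (Prod.ext (congrFun h none) (congrFun h (some none)))
      (funext fun j => congrFun h (some (some j)))
  have h1 := entropy_comp_inj p
    (fun ωf : 𝓦 × (Fin (N+1) → 𝓩) => ((ωf.2 i0, ωf.2 i1), fun j : J => ωf.2 (ι j))) _ he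
  rw [← h1]
  have h2 : (fun ωf : 𝓦 × (Fin (N+1) → 𝓩) =>
        (fun o : Option (Option J) =>
          o.elim (ωf.2 i0) (fun o' => o'.elim (ωf.2 i1) (fun j => ωf.2 (ι j)))))
      = fun ωf => fun o : Option (Option J) => ωf.2 (o.elim i0 (fun o' => o'.elim i1 ι)) := by
    funext ωf o
    rcases o with _ | (_ | j) <;> rfl
  rw [h2, H_tuple N π q hq1 p hp _ hκ]
  rw [show Fintype.card (Option (Option J)) = Fintype.card J + 1 + 1 by simp]

lemma H_pairW {J : Type*} [Fintype J] [DecidableEq J]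
    (ι : J → Fin (N + 1)) (i0 : Fin (N + 1))
    (hκ : Function.Injective (fun o : Option J => o.elim i0 ι)) :
    entropy p (fun ωf => ((ωf.1, ωf.2 i0), fun j : J => ωf.2 (ι j)))
      = ent (MDist π q (Fin (Fintype.card J + 1))) := by
  have he : Function.Injective
      (fun x : (𝓦 × 𝓩) × (J → 𝓩) =>
        ((x.1.1, fun o : Option J => o.elim x.1.2 x.2) : 𝓦 × (Option J → 𝓩))) := by
    intro a b h
    have h1 := congrArg Prod.fst h
    have h2 := congrArg Prod.snd h
    refine Prod.ext (Prod.ext h1 (congrFun h2 none)) (funext fun j => congrFun h2 (some j))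
  have h1 := entropy_comp_inj p
    (fun ωf : 𝓦 × (Fin (N+1) → 𝓩) => ((ωf.1, ωf.2 i0), fun j : J => ωf.2 (ι j))) _ he
  rw [← h1]
  have h2 : (fun ωf : 𝓦 × (Fin (N+1) → 𝓩) =>
        ((ωf.1, fun o : Option J => o.elim (ωf.2 i0) (fun j => ωf.2 (ι j))) : 𝓦 × (Option J → 𝓩)))
      = fun ωf => (ωf.1, fun o : Option J => ωf.2 (o.elim i0 ι)) := by
    funext ωf
    refine Prod.ext rfl ?_
    funext o
    cases o <;> rfl
  rw [h2, H_tupleW N π q hq1 p hp (fun o : Option J => o.elim i0 ι) hκ]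
  rw [show Fintype.card (Option J) = Fintype.card J + 1 from Fintype.card_option]

end Helpers


/-- Theorem 1 (main CMI decomposition): with joint law `p(w) p(z|w) ∏_{n=1}^N p(zₙ|w)`,
`I(W; Z | Z^N) = (1/N) I(W; Z^N) - (1/N) Σₙ I(Z; Zₙ | Z^{N\n})
  - (1/N) Σ_{n'=1}^{N-1} Σ_{n=n'}^{N-1} I(Z_{n+1}; Zₙ | Z^{n-1})`.
The sample space is `𝓦 × (Fin (N+1) → 𝓩)`; index `Fin.last N` is the test point `Z`,
index `i.castSucc` for `i : Fin N` is the training point `Z_{i+1}` (1-based). -/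
theorem cmi_decomposition {𝓦 𝓩 : Type*} [Fintype 𝓦] [DecidableEq 𝓦] [Fintype 𝓩] [DecidableEq 𝓩]
    (N : ℕ) (hN : 1 ≤ N) (π : 𝓦 → ℝ) (q : 𝓦 → 𝓩 → ℝ)
    (hπ : IsPMF π) (hq : ∀ w, IsPMF (q w))
    (p : 𝓦 × (Fin (N + 1) → 𝓩) → ℝ)
    (hp : p = fun ωf => π ωf.1 * ∏ i, q ωf.1 (ωf.2 i)) :
    condMI p (fun ωf => ωf.1) (fun ωf => ωf.2 (Fin.last N))
        (fun ωf => fun i : Fin N => ωf.2 i.castSucc)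
      = (1 / (N : ℝ)) * mutualInfo p (fun ωf => ωf.1) (fun ωf => fun i : Fin N => ωf.2 i.castSucc)
        - (1 / (N : ℝ)) * ∑ n : Fin N,
            condMI p (fun ωf => ωf.2 (Fin.last N)) (fun ωf => ωf.2 n.castSucc)
              (fun ωf => fun i : {i : Fin N // i ≠ n} => ωf.2 i.val.castSucc)
        - (1 / (N : ℝ)) * ∑ n' ∈ Finset.Icc 1 (N - 1), ∑ n ∈ Finset.Icc n' (N - 1),
            condMI p (fun ωf => ωf.2 ⟨n % (N + 1), Nat.mod_lt _ (Nat.succ_pos N)⟩)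
              (fun ωf => ωf.2 ⟨(n - 1) % (N + 1), Nat.mod_lt _ (Nat.succ_pos N)⟩)
              (fun ωf => fun i : Fin (n - 1) => ωf.2 ⟨i.val % (N + 1), Nat.mod_lt _ (Nat.succ_pos N)⟩) := by
  have hq1 : ∀ w, ∑ ζ, q w ζ = 1 := fun w => (hq w).2
  have hπ1 : ∑ w, π w = 1 := hπ.2
  set A : ℕ → ℝ := fun k => ent (mDist π q (Fin k)) with hA
  set B : ℕ → ℝ := fun k => ent (MDist π q (Fin k)) with hB
  have hinj_cast : Function.Injective (Fin.castSucc : Fin N → Fin (N+1)) :=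
    Fin.castSucc_injective N
  -- basic entropies
  have e2 : entropy p (fun ωf : 𝓦 × (Fin (N+1) → 𝓩) => fun i : Fin N => ωf.2 i.castSucc)
      = A N := by
    have := H_tuple N π q hq1 p hp Fin.castSucc hinj_cast
    (try rw [Fintype.card_fin] at this); exact this
  have e1 : entropy p (fun ωf : 𝓦 × (Fin (N+1) → 𝓩) => (ωf.1, fun i : Fin N => ωf.2 i.castSucc))
      = B N := by
    have := H_tupleW N π q hq1 p hp Fin.castSucc hinj_cast
    (try rw [Fintype.card_fin] at this); exact this
  have hκ1 : Function.Injective (fun o : Option (Fin N) => o.elim (Fin.last N) Fin.castSucc) := by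
    rintro (_|a) (_|b) h
    · rfl
    · exact absurd h.symm (Fin.castSucc_lt_last b).ne
    · exact absurd h (Fin.castSucc_lt_last a).ne
    · simp only [Option.elim] at h
      rw [hinj_cast h]
  have e3 : entropy p (fun ωf : 𝓦 × (Fin (N+1) → 𝓩) =>
        (ωf.2 (Fin.last N), fun i : Fin N => ωf.2 i.castSucc))
      = A (N+1) := by
    have := H_pair1 N π q hq1 p hp Fin.castSucc (Fin.last N) hκ1
    (try rw [Fintype.card_fin] at this); exact this
  have e4 : entropy p (fun ωf : 𝓦 × (Fin (N+1) → 𝓩) =>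
        ((ωf.1, ωf.2 (Fin.last N)), fun i : Fin N => ωf.2 i.castSucc))
      = B (N+1) := by
    have := H_pairW N π q hq1 p hp Fin.castSucc (Fin.last N) hκ1
    (try rw [Fintype.card_fin] at this); exact this
  have e5 : entropy p (fun ωf : 𝓦 × (Fin (N+1) → 𝓩) => ωf.1) = B 0 := by
    have := H_W N π q hq1 p hp
    (try rw [Fintype.card_fin] at this); exact this
  -- second sum
  have hcard : ∀ n : Fin N, Fintype.card {i : Fin N // i ≠ n} = N - 1 := by
    intro n
    simp [Fintype.card_subtype_compl]
  have hterm2 : ∀ n : Fin N,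
      condMI p (fun ωf => ωf.2 (Fin.last N)) (fun ωf => ωf.2 n.castSucc)
        (fun ωf => fun i : {i : Fin N // i ≠ n} => ωf.2 i.val.castSucc)
      = 2 * A N - A (N+1) - A (N-1) := by
    intro n
    have hιinj : Function.Injective (fun i : {i : Fin N // i ≠ n} => i.val.castSucc) := by
      intro a b h
      exact Subtype.ext (hinj_cast h)
    have t1 : entropy p (fun ωf : 𝓦 × (Fin (N+1) → 𝓩) =>
          fun i : {i : Fin N // i ≠ n} => ωf.2 i.val.castSucc) = A (N-1) := by
      have := H_tuple N π q hq1 p hp _ hιinj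
      rw [hcard n] at this
      (try rw [Fintype.card_fin] at this); exact this
    have hκa : Function.Injective (fun o : Option {i : Fin N // i ≠ n} =>
        o.elim (Fin.last N) (fun i => i.val.castSucc)) := by
      rintro (_|a) (_|b) h
      · rfl
      · exact absurd h.symm (Fin.castSucc_lt_last b.val).ne
      · exact absurd h (Fin.castSucc_lt_last a.val).ne
      · simp only [Option.elim] at h
        rw [hιinj h]
    have hκb : Function.Injective (fun o : Option {i : Fin N // i ≠ n} =>
        o.elim n.castSucc (fun i => i.val.castSucc)) := by
      rintro (_|a) (_|b) h
      · rfl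
      · simp only [Option.elim] at h
        exact absurd (hinj_cast h).symm b.2
      · simp only [Option.elim] at h
        exact absurd (hinj_cast h) a.2
      · simp only [Option.elim] at h
        rw [hιinj h]
    have hκc : Function.Injective (fun o : Option (Option {i : Fin N // i ≠ n}) =>
        o.elim (Fin.last N) (fun o' => o'.elim n.castSucc (fun i => i.val.castSucc))) := by
      rintro (_|(_|a)) (_|(_|b)) h <;> simp only [Option.elim] at h
      · rfl
      · exact absurd h.symm (Fin.castSucc_lt_last n).ne
      · exact absurd h.symm (Fin.castSucc_lt_last b.val).ne
      · exact absurd h (Fin.castSucc_lt_last n).ne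
      · rfl
      · exact absurd (hinj_cast h).symm b.2
      · exact absurd h (Fin.castSucc_lt_last a.val).ne
      · exact absurd (hinj_cast h) a.2
      · rw [hιinj h]
    have hN1 : N - 1 + 1 = N := Nat.succ_pred_eq_of_pos hN
    have t2 : entropy p (fun ωf : 𝓦 × (Fin (N+1) → 𝓩) =>
          (ωf.2 (Fin.last N), fun i : {i : Fin N // i ≠ n} => ωf.2 i.val.castSucc)) = A N := by
      have := H_pair1 N π q hq1 p hp _ (Fin.last N) hκa
      rw [hcard n, hN1] at this
      (try rw [Fintype.card_fin] at this); exact this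
    have t3 : entropy p (fun ωf : 𝓦 × (Fin (N+1) → 𝓩) =>
          (ωf.2 n.castSucc, fun i : {i : Fin N // i ≠ n} => ωf.2 i.val.castSucc)) = A N := by
      have := H_pair1 N π q hq1 p hp _ n.castSucc hκb
      rw [hcard n, hN1] at this
      (try rw [Fintype.card_fin] at this); exact this
    have t4 : entropy p (fun ωf : 𝓦 × (Fin (N+1) → 𝓩) =>
          ((ωf.2 (Fin.last N), ωf.2 n.castSucc),
            fun i : {i : Fin N // i ≠ n} => ωf.2 i.val.castSucc)) = A (N+1) := by
      have := H_pair2 N π q hq1 p hp _ (Fin.last N) n.castSucc hκc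
      rw [hcard n, hN1] at this
      (try rw [Fintype.card_fin] at this); exact this
    simp only [condMI, condEntropy]
    rw [t1, t2, t3, t4]
    ring
  have hsum2 : (∑ n : Fin N,
      condMI p (fun ωf => ωf.2 (Fin.last N)) (fun ωf => ωf.2 n.castSucc)
        (fun ωf => fun i : {i : Fin N // i ≠ n} => ωf.2 i.val.castSucc))
      = (N : ℝ) * (2 * A N - A (N+1) - A (N-1)) := by
    rw [Finset.sum_congr rfl fun n _ => hterm2 n]
    rw [Finset.sum_const, Finset.card_univ, Fintype.card_fin, nsmul_eq_mul]
  -- third sum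
  have hterm3 : ∀ n' ∈ Finset.Icc 1 (N-1), ∀ n ∈ Finset.Icc n' (N-1),
      condMI p (fun ωf => ωf.2 ⟨n % (N + 1), Nat.mod_lt _ (Nat.succ_pos N)⟩)
        (fun ωf => ωf.2 ⟨(n - 1) % (N + 1), Nat.mod_lt _ (Nat.succ_pos N)⟩)
        (fun ωf => fun i : Fin (n - 1) => ωf.2 ⟨i.val % (N + 1), Nat.mod_lt _ (Nat.succ_pos N)⟩)
      = 2 * A n - A (n+1) - A (n-1) := by
    intro n' hn' n hn
    simp only [Finset.mem_Icc] at hn' hn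
    have h1n : 1 ≤ n := le_trans hn'.1 hn.1
    have hnN : n < N + 1 := by omega
    have hn1N : n - 1 < N + 1 := by omega
    have htup : n - 1 ≤ N + 1 := by omega
    have c0 : (⟨n % (N + 1), Nat.mod_lt _ (Nat.succ_pos N)⟩ : Fin (N+1)) = ⟨n, hnN⟩ :=
      Fin.ext (Nat.mod_eq_of_lt hnN)
    have c1 : (⟨(n - 1) % (N + 1), Nat.mod_lt _ (Nat.succ_pos N)⟩ : Fin (N+1)) = ⟨n - 1, hn1N⟩ :=
      Fin.ext (Nat.mod_eq_of_lt hn1N)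
    have ctup : (fun ωf : 𝓦 × (Fin (N+1) → 𝓩) => fun i : Fin (n - 1) =>
          ωf.2 ⟨i.val % (N + 1), Nat.mod_lt _ (Nat.succ_pos N)⟩)
        = fun ωf => fun i : Fin (n - 1) => ωf.2 (Fin.castLE htup i) := by
      funext ωf i
      exact congrArg ωf.2 (Fin.ext (Nat.mod_eq_of_lt (by have := i.isLt; omega)))
    rw [c0, c1, ctup]
    have hιinj : Function.Injective (Fin.castLE htup) := Fin.castLE_injective htup
    have u1 : entropy p (fun ωf : 𝓦 × (Fin (N+1) → 𝓩) =>
          fun i : Fin (n - 1) => ωf.2 (Fin.castLE htup i)) = A (n-1) := by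
      have := H_tuple N π q hq1 p hp _ hιinj
      (try rw [Fintype.card_fin] at this); exact this
    have hκa : Function.Injective (fun o : Option (Fin (n-1)) =>
        o.elim (⟨n, hnN⟩ : Fin (N+1)) (Fin.castLE htup)) := by
      rintro (_|a) (_|b) h <;> simp only [Option.elim] at h
      · rfl
      · have hb := b.isLt
        simp [Fin.ext_iff] at h
        omega
      · have ha := a.isLt
        simp [Fin.ext_iff] at h
        omega
      · rw [hιinj h]
    have hκb : Function.Injective (fun o : Option (Fin (n-1)) =>
        o.elim (⟨n - 1, hn1N⟩ : Fin (N+1)) (Fin.castLE htup)) := by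
      rintro (_|a) (_|b) h <;> simp only [Option.elim] at h
      · rfl
      · have hb := b.isLt
        simp [Fin.ext_iff] at h
        omega
      · have ha := a.isLt
        simp [Fin.ext_iff] at h
        omega
      · rw [hιinj h]
    have hκc : Function.Injective (fun o : Option (Option (Fin (n-1))) =>
        o.elim (⟨n, hnN⟩ : Fin (N+1))
          (fun o' => o'.elim (⟨n - 1, hn1N⟩ : Fin (N+1)) (Fin.castLE htup))) := by
      rintro (_|(_|a)) (_|(_|b)) h <;> simp only [Option.elim] at h
      · rfl
      · simp [Fin.ext_iff] at h; omega
      · have hb := b.isLt; simp [Fin.ext_iff] at h; omega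
      · simp [Fin.ext_iff] at h; omega
      · rfl
      · have hb := b.isLt; simp [Fin.ext_iff] at h; omega
      · have ha := a.isLt; simp [Fin.ext_iff] at h; omega
      · have ha := a.isLt; simp [Fin.ext_iff] at h; omega
      · rw [hιinj h]
    have hcardn : n - 1 + 1 = n := Nat.succ_pred_eq_of_pos h1n
    have u2 : entropy p (fun ωf : 𝓦 × (Fin (N+1) → 𝓩) =>
          ((ωf.2 ⟨n, hnN⟩ : 𝓩), fun i : Fin (n - 1) => ωf.2 (Fin.castLE htup i))) = A n := by
      have := H_pair1 N π q hq1 p hp _ _ hκa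
      rw [Fintype.card_fin, hcardn] at this
      (try rw [Fintype.card_fin] at this); exact this
    have u3 : entropy p (fun ωf : 𝓦 × (Fin (N+1) → 𝓩) =>
          ((ωf.2 ⟨n - 1, hn1N⟩ : 𝓩), fun i : Fin (n - 1) => ωf.2 (Fin.castLE htup i))) = A n := by
      have := H_pair1 N π q hq1 p hp _ _ hκb
      rw [Fintype.card_fin, hcardn] at this
      (try rw [Fintype.card_fin] at this); exact this
    have u4 : entropy p (fun ωf : 𝓦 × (Fin (N+1) → 𝓩) =>
          ((ωf.2 ⟨n, hnN⟩, ωf.2 ⟨n - 1, hn1N⟩),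
            fun i : Fin (n - 1) => ωf.2 (Fin.castLE htup i))) = A (n+1) := by
      have := H_pair2 N π q hq1 p hp _ _ _ hκc
      rw [Fintype.card_fin, hcardn] at this
      (try rw [Fintype.card_fin] at this); exact this
    simp only [condMI, condEntropy]
    rw [u1, u2, u3, u4]
    ring
  have hsum3 : (∑ n' ∈ Finset.Icc 1 (N - 1), ∑ n ∈ Finset.Icc n' (N - 1),
      condMI p (fun ωf => ωf.2 ⟨n % (N + 1), Nat.mod_lt _ (Nat.succ_pos N)⟩)
        (fun ωf => ωf.2 ⟨(n - 1) % (N + 1), Nat.mod_lt _ (Nat.succ_pos N)⟩)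
        (fun ωf => fun i : Fin (n - 1) => ωf.2 ⟨i.val % (N + 1), Nat.mod_lt _ (Nat.succ_pos N)⟩))
      = (N : ℝ) * A (N-1) - ((N : ℝ) - 1) * A N - A 0 := by
    rw [Finset.sum_congr rfl fun n' hn' => Finset.sum_congr rfl fun n hn => hterm3 n' hn' n hn]
    rw [swap_sum (fun n => 2 * A n - A (n+1) - A (n-1)) (N-1)]
    rw [telescope A (N-1)]
    have hN1 : N - 1 + 1 = N := Nat.succ_pred_eq_of_pos hN
    rw [hN1]
    have : ((N - 1 : ℕ) : ℝ) = (N : ℝ) - 1 := by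
      push_cast [Nat.cast_sub hN]
      ring
    rw [this]
    ring
  rw [hsum2, hsum3]
  simp only [condMI, condEntropy, mutualInfo]
  rw [e1, e2, e3, e4, e5]
  have hb0 : B 0 = ent π + (0 : ℕ) * ∑ w, π w * ent (q w) := bEnt_eq π q hπ1 hq1 0
  have hbN : B N = ent π + (N : ℕ) * ∑ w, π w * ent (q w) := bEnt_eq π q hπ1 hq1 N
  have hbN1 : B (N+1) = ent π + ((N+1 : ℕ)) * ∑ w, π w * ent (q w) := bEnt_eq π q hπ1 hq1 (N+1)
  have ha0 : A 0 = 0 := aEnt_zero π q hπ1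
  rw [hb0, hbN, hbN1, ha0]
  have hNne : (N : ℝ) ≠ 0 := Nat.cast_ne_zero.mpr (by omega)
  field_simp
  push_cast
  ring
end

section
/- Under the conditionally i.i.d. model p(w) p(z|w) ∏_{n=1}^N p(zₙ|w) with finite-valued variables, the conditional mutual information satisfies I(W; Z | Z^N) ≤ (1/N) I(W; Z^N) - (1/N) Σ_{n'=1}^{N-1} Σ_{n=n'}^{N-1} I(Z_{n+1}; Zₙ | Z^{n-1}). -/
open Finset

section General
variable {Ω : Type*} [Fintype Ω] {p : Ω → ℝ}

lemma probOf_nonneg {α} [DecidableEq α] (hp : ∀ ω, 0 ≤ p ω) (X : Ω → α) (x : α) :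
    0 ≤ probOf p X x :=
  Finset.sum_nonneg fun ω _ => by split <;> simp [hp ω]

lemma sum_probOf {α} [Fintype α] [DecidableEq α] (X : Ω → α) :
    ∑ x, probOf p X x = ∑ ω, p ω := by
  unfold probOf
  rw [Finset.sum_comm]
  exact Finset.sum_congr rfl fun ω _ => by simp

lemma entropy_eq {α} [Fintype α] [DecidableEq α] (X : Ω → α) :
    entropy p X = ∑ x, Real.negMulLog (probOf p X x) := by
  unfold entropy
  rw [← Finset.sum_neg_distrib]
  exact Finset.sum_congr rfl fun x _ => by rw [Real.negMulLog]; ring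

lemma sum_rot {α β γ M : Type*} [AddCommMonoid M] [Fintype α] [Fintype β] [Fintype γ]
    (f : α → β → γ → M) :
    ∑ x, ∑ y, ∑ z, f x y z = ∑ z, ∑ x, ∑ y, f x y z :=
  calc ∑ x, ∑ y, ∑ z, f x y z
      = ∑ x, ∑ z, ∑ y, f x y z := Finset.sum_congr rfl fun x _ => Finset.sum_comm
    _ = ∑ z, ∑ x, ∑ y, f x y z := Finset.sum_comm

lemma probOf_comp {α β} [DecidableEq α] [DecidableEq β] (X : Ω → α) {f : α → β}
    (hf : Function.Injective f) (x : α) :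
    probOf p (fun ω => f (X ω)) (f x) = probOf p X x :=
  Finset.sum_congr rfl fun ω _ => by simp [hf.eq_iff]

lemma probOf_comp_notRange {α β} [DecidableEq α] [DecidableEq β] (X : Ω → α) (f : α → β)
    {y : β} (hy : ∀ x, f x ≠ y) :
    probOf p (fun ω => f (X ω)) y = 0 :=
  Finset.sum_eq_zero fun ω _ => by simp only [ite_eq_right_iff]; exact fun h => absurd h (hy _)

lemma entropy_comp {α β} [Fintype α] [DecidableEq α] [Fintype β] [DecidableEq β]
    (X : Ω → α) {f : α → β} (hf : Function.Injective f) :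
    entropy p (fun ω => f (X ω)) = entropy p X := by
  rw [entropy_eq, entropy_eq]
  symm
  calc ∑ x, Real.negMulLog (probOf p X x)
      = ∑ x, Real.negMulLog (probOf p (fun ω => f (X ω)) (f x)) :=
        Finset.sum_congr rfl fun x _ => by rw [probOf_comp X hf]
    _ = ∑ y ∈ Finset.univ.image f, Real.negMulLog (probOf p (fun ω => f (X ω)) y) :=
        by rw [Finset.sum_image fun x _ y _ h => hf h]
    _ = ∑ y, Real.negMulLog (probOf p (fun ω => f (X ω)) y) := by
        apply Finset.sum_subset (Finset.subset_univ _)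
        intro y _ hy
        rw [probOf_comp_notRange X f, Real.negMulLog_zero]
        intro x hx
        exact hy (Finset.mem_image.2 ⟨x, Finset.mem_univ x, hx⟩)

lemma probOf_snd {α β : Type*} [Fintype α] [DecidableEq α] [DecidableEq β]
    (X : Ω → α) (Y : Ω → β) (y : β) :
    probOf p Y y = ∑ x, probOf p (fun ω => (X ω, Y ω)) (x, y) := by
  unfold probOf
  rw [Finset.sum_comm]
  refine Finset.sum_congr rfl fun ω _ => ?_
  by_cases h : Y ω = y
  · simp [h, Prod.ext_iff]
  · simp [h, Prod.ext_iff]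

lemma key_pointwise {a u v w : ℝ} (ha : 0 ≤ a) (hu : a ≤ u) (hv : a ≤ v) (hw : a ≤ w)
    (hu0 : 0 ≤ u) (hv0 : 0 ≤ v) (hw0 : 0 ≤ w) :
    a - u * v / w ≤ -(a * Real.log u) - a * Real.log v + a * Real.log w + a * Real.log a := by
  rcases eq_or_lt_of_le ha with h | h
  · have hq : 0 ≤ u * v / w := div_nonneg (mul_nonneg hu0 hv0) hw0
    rw [← h]
    simp only [zero_mul, neg_zero, zero_sub, add_zero, zero_add]
    linarith
  · have hu' : 0 < u := lt_of_lt_of_le h hu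
    have hv' : 0 < v := lt_of_lt_of_le h hv
    have hw' : 0 < w := lt_of_lt_of_le h hw
    have ht : (0:ℝ) < a * w / (u * v) := by positivity
    have hlog := Real.one_sub_inv_le_log_of_pos ht
    have hexp : Real.log (a * w / (u * v)) =
        Real.log a + Real.log w - Real.log u - Real.log v := by
      rw [Real.log_div (by positivity) (by positivity), Real.log_mul h.ne' hw'.ne',
        Real.log_mul hu'.ne' hv'.ne']
      ring
    have h2 := mul_le_mul_of_nonneg_left hlog ha
    rw [hexp] at h2
    have h3 : a * (1 - (a * w / (u * v))⁻¹) = a - u * v / w := by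
      field_simp
    rw [h3] at h2
    linarith

lemma condMI_nonneg {α β γ : Type*} [Fintype α] [DecidableEq α] [Fintype β] [DecidableEq β]
    [Fintype γ] [DecidableEq γ] (hp : IsPMF p) (X : Ω → α) (Y : Ω → β) (Z : Ω → γ) :
    0 ≤ condMI p X Y Z := by
  obtain ⟨hp0, hp1⟩ := hp
  set r : α → β → γ → ℝ := fun x y z => probOf p (fun ω => ((X ω, Y ω), Z ω)) ((x, y), z)
    with hr
  set rXZ : α → γ → ℝ := fun x z => probOf p (fun ω => (X ω, Z ω)) (x, z) with hrXZ
  set rYZ : β → γ → ℝ := fun y z => probOf p (fun ω => (Y ω, Z ω)) (y, z) with hrYZ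
  set rZ : γ → ℝ := fun z => probOf p Z z with hrZ
  have r0 : ∀ x y z, 0 ≤ r x y z := fun x y z => probOf_nonneg hp0 _ _
  have hXZ : ∀ x z, rXZ x z = ∑ y, r x y z := by
    intro x z
    simp only [hr, hrXZ, probOf]
    rw [Finset.sum_comm]
    refine Finset.sum_congr rfl fun ω _ => ?_
    by_cases h1 : X ω = x
    · by_cases h2 : Z ω = z
      · simp [Prod.ext_iff, h1, h2]
      · simp [Prod.ext_iff, h1, h2]
    · simp [Prod.ext_iff, h1]
  have hYZ : ∀ y z, rYZ y z = ∑ x, r x y z := by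
    intro y z
    simp only [hr, hrYZ, probOf]
    rw [Finset.sum_comm]
    refine Finset.sum_congr rfl fun ω _ => ?_
    by_cases h1 : Y ω = y
    · by_cases h2 : Z ω = z
      · simp [Prod.ext_iff, h1, h2]
      · simp [Prod.ext_iff, h1, h2]
    · simp [Prod.ext_iff, h1]
  have hZ : ∀ z, rZ z = ∑ x, ∑ y, r x y z := fun z =>
    (probOf_snd X Z z).trans (Finset.sum_congr rfl fun x _ => hXZ x z)
  have rZ0 : ∀ z, 0 ≤ rZ z := fun z => probOf_nonneg hp0 _ _
  have rXZ0 : ∀ x z, 0 ≤ rXZ x z := fun x z => probOf_nonneg hp0 _ _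
  have rYZ0 : ∀ y z, 0 ≤ rYZ y z := fun y z => probOf_nonneg hp0 _ _
  have hsumZ : ∑ z, rZ z = 1 := by rw [hrZ]; rw [sum_probOf, hp1]
  have rsum : ∑ x, ∑ y, ∑ z, r x y z = 1 := by
    have h1 : ∑ t : (α × β) × γ, probOf p (fun ω => ((X ω, Y ω), Z ω)) t = 1 := by
      rw [sum_probOf, hp1]
    rw [Fintype.sum_prod_type, Fintype.sum_prod_type] at h1
    exact h1
  -- entropy rewrites
  have eXYZ : entropy p (fun ω => ((X ω, Y ω), Z ω)) =
      ∑ x, ∑ y, ∑ z, -(r x y z * Real.log (r x y z)) := by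
    rw [entropy_eq, Fintype.sum_prod_type, Fintype.sum_prod_type]
    simp [Real.negMulLog]
    rfl
  have eXZ : entropy p (fun ω => (X ω, Z ω)) =
      ∑ x, ∑ y, ∑ z, -(r x y z * Real.log (rXZ x z)) := by
    rw [entropy_eq, Fintype.sum_prod_type]
    refine Finset.sum_congr rfl fun x _ => ?_
    rw [Finset.sum_comm]
    refine Finset.sum_congr rfl fun z _ => ?_
    show Real.negMulLog (rXZ x z) = _
    rw [Finset.sum_neg_distrib, ← Finset.sum_mul, ← hXZ x z, Real.negMulLog]
    ring
  have eYZ : entropy p (fun ω => (Y ω, Z ω)) =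
      ∑ x, ∑ y, ∑ z, -(r x y z * Real.log (rYZ y z)) := by
    rw [entropy_eq, Fintype.sum_prod_type, sum_rot, sum_rot]
    refine Finset.sum_congr rfl fun y _ => Finset.sum_congr rfl fun z _ => ?_
    show Real.negMulLog (rYZ y z) = _
    rw [Finset.sum_neg_distrib, ← Finset.sum_mul, ← hYZ y z, Real.negMulLog]
    ring
  have eZ : entropy p Z = ∑ x, ∑ y, ∑ z, -(r x y z * Real.log (rZ z)) := by
    rw [entropy_eq, sum_rot]
    refine Finset.sum_congr rfl fun z _ => ?_
    show Real.negMulLog (rZ z) = _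
    rw [Real.negMulLog, neg_mul, hZ z]
    rw [Finset.sum_mul, ← Finset.sum_neg_distrib]
    refine Finset.sum_congr rfl fun x _ => ?_
    rw [Finset.sum_mul, ← Finset.sum_neg_distrib]
  have hcond : condMI p X Y Z = ∑ x, ∑ y, ∑ z,
      (-(r x y z * Real.log (rXZ x z)) - r x y z * Real.log (rYZ y z)
        + r x y z * Real.log (rZ z) + r x y z * Real.log (r x y z)) := by
    simp only [condMI, condEntropy]
    rw [eXZ, eYZ, eZ, eXYZ]
    simp only [Finset.sum_add_distrib, Finset.sum_sub_distrib, Finset.sum_neg_distrib]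
    ring
  have hQ : ∑ x, ∑ y, ∑ z, rXZ x z * rYZ y z / rZ z ≤ 1 := by
    rw [sum_rot]
    rw [← hsumZ]
    refine Finset.sum_le_sum fun z _ => ?_
    have hyz : ∑ y, rYZ y z = rZ z := by
      rw [hZ z, Finset.sum_comm]
      exact Finset.sum_congr rfl fun y _ => hYZ y z
    have hxz : ∑ x, rXZ x z = rZ z := by
      rw [hZ z]
      exact Finset.sum_congr rfl fun x _ => hXZ x z
    have hfac : ∑ x, ∑ y, rXZ x z * rYZ y z / rZ z = rZ z * rZ z / rZ z := by
      calc ∑ x, ∑ y, rXZ x z * rYZ y z / rZ z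
          = ∑ x, rXZ x z * rZ z / rZ z := by
            refine Finset.sum_congr rfl fun x _ => ?_
            rw [← Finset.sum_div, ← Finset.mul_sum, hyz]
        _ = rZ z * rZ z / rZ z := by rw [← Finset.sum_div, ← Finset.sum_mul, hxz]
    rw [hfac]
    rcases eq_or_lt_of_le (rZ0 z) with h | h
    · rw [← h]; simp
    · rw [mul_div_assoc, div_self h.ne', mul_one]
  have hlow : ∑ x, ∑ y, ∑ z, (r x y z - rXZ x z * rYZ y z / rZ z) ≤ condMI p X Y Z := by
    rw [hcond]
    refine Finset.sum_le_sum fun x _ => Finset.sum_le_sum fun y _ =>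
      Finset.sum_le_sum fun z _ => ?_
    refine key_pointwise (r0 x y z) ?_ ?_ ?_ (rXZ0 x z) (rYZ0 y z) (rZ0 z)
    · rw [hXZ x z]
      exact Finset.single_le_sum (fun y _ => r0 x y z) (Finset.mem_univ y)
    · rw [hYZ y z]
      exact Finset.single_le_sum (fun x _ => r0 x y z) (Finset.mem_univ x)
    · rw [hZ z]
      calc r x y z ≤ ∑ y, r x y z :=
            Finset.single_le_sum (fun y _ => r0 x y z) (Finset.mem_univ y)
        _ ≤ ∑ x, ∑ y, r x y z :=
            Finset.single_le_sum (fun x _ => Finset.sum_nonneg fun y _ => r0 x y z)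
              (Finset.mem_univ x)
  have hsplit : ∑ x, ∑ y, ∑ z, (r x y z - rXZ x z * rYZ y z / rZ z)
      = 1 - ∑ x, ∑ y, ∑ z, rXZ x z * rYZ y z / rZ z := by
    rw [← rsum, ← Finset.sum_sub_distrib]
    refine Finset.sum_congr rfl fun x _ => ?_
    rw [← Finset.sum_sub_distrib]
    refine Finset.sum_congr rfl fun y _ => ?_
    rw [← Finset.sum_sub_distrib]
  rw [hsplit] at hlow
  linarith
end General
section Model
variable {𝓦 𝓩 : Type*} [Fintype 𝓦] [DecidableEq 𝓦] [Fintype 𝓩] [DecidableEq 𝓩]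

/-- Entropy of `m` exchangeable coordinates under the mixture distribution. -/
noncomputable def Bval (π : 𝓦 → ℝ) (q : 𝓦 → 𝓩 → ℝ) (m : ℕ) : ℝ :=
  ∑ z : Fin m → 𝓩, Real.negMulLog (∑ w, π w * ∏ i, q w (z i))

variable {N : ℕ} {π : 𝓦 → ℝ} {q : 𝓦 → 𝓩 → ℝ} {p : 𝓦 × (Fin (N + 1) → 𝓩) → ℝ}

lemma isPMF_model (hπ : IsPMF π) (hq : ∀ w, IsPMF (q w))
    (hp : p = fun ωf => π ωf.1 * ∏ i, q ωf.1 (ωf.2 i)) : IsPMF p := by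
  subst hp
  constructor
  · intro ωf
    exact mul_nonneg (hπ.1 _) (Finset.prod_nonneg fun i _ => (hq _).1 _)
  · rw [Fintype.sum_prod_type]
    have h1 : ∀ w, ∑ f : Fin (N+1) → 𝓩, π w * ∏ i, q w (f i) = π w := by
      intro w
      rw [← Finset.mul_sum, ← Fintype.prod_sum fun _ j => q w j]
      simp [(hq w).2]
    rw [Finset.sum_congr rfl fun w _ => h1 w, hπ.2]

lemma sum_indicator_prod {κ : Type*} [Fintype κ] [DecidableEq κ]
    (hq : ∀ w, IsPMF (q w)) (ι : κ → Fin (N + 1)) (hι : Function.Injective ι)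
    (w : 𝓦) (z : κ → 𝓩) :
    ∑ f : Fin (N + 1) → 𝓩, (if (fun k => f (ι k)) = z then ∏ i, q w (f i) else 0)
      = ∏ k, q w (z k) := by
  classical
  set h : Fin (N + 1) → 𝓩 → ℝ := fun i x =>
    if hi : ∃ k, ι k = i then (if x = z hi.choose then q w x else 0) else q w x with hh
  have claim1 : ∀ f : Fin (N + 1) → 𝓩,
      (if (fun k => f (ι k)) = z then ∏ i, q w (f i) else 0) = ∏ i, h i (f i) := by
    intro f
    by_cases hf : (fun k => f (ι k)) = z
    · rw [if_pos hf]
      refine Finset.prod_congr rfl fun i _ => ?_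
      by_cases hi : ∃ k, ι k = i
      · simp only [hh]
        rw [dif_pos hi, if_pos]
        have hspec := hi.choose_spec
        calc f i = f (ι hi.choose) := by rw [hspec]
          _ = z hi.choose := congrFun hf hi.choose
      · simp only [hh]
        rw [dif_neg hi]
    · rw [if_neg hf]
      have hne : ∃ k, f (ι k) ≠ z k := by
        by_contra hcon
        push_neg at hcon
        exact hf (funext hcon)
      obtain ⟨k, hk⟩ := hne
      symm
      apply Finset.prod_eq_zero (Finset.mem_univ (ι k))
      have hex : ∃ k', ι k' = ι k := ⟨k, rfl⟩
      simp only [hh]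
      rw [dif_pos hex, if_neg]
      rw [show hex.choose = k from hι hex.choose_spec]
      exact hk
  rw [Finset.sum_congr rfl fun f _ => claim1 f, ← Fintype.prod_sum h]
  have hsum : ∀ i, ∑ x, h i x
      = if hi : ∃ k, ι k = i then q w (z hi.choose) else 1 := by
    intro i
    by_cases hi : ∃ k, ι k = i
    · rw [dif_pos hi]
      simp only [hh]
      rw [Finset.sum_congr rfl fun x _ => by rw [dif_pos hi]]
      simp
    · rw [dif_neg hi]
      simp only [hh]
      rw [Finset.sum_congr rfl fun x _ => by rw [dif_neg hi]]
      exact (hq w).2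
  rw [Finset.prod_congr rfl fun i _ => hsum i]
  calc ∏ i, (if hi : ∃ k, ι k = i then q w (z hi.choose) else 1)
      = ∏ i ∈ Finset.univ.image ι, (if hi : ∃ k, ι k = i then q w (z hi.choose) else 1) := by
        symm
        apply Finset.prod_subset (Finset.subset_univ _)
        intro i _ hni
        rw [dif_neg]
        intro ⟨k, hk⟩
        exact hni (Finset.mem_image.2 ⟨k, Finset.mem_univ k, hk⟩)
    _ = ∏ k, (if hi : ∃ k', ι k' = ι k then q w (z hi.choose) else 1) :=
        Finset.prod_image fun a _ b _ hab => hι hab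
    _ = ∏ k, q w (z k) := by
        refine Finset.prod_congr rfl fun k _ => ?_
        rw [dif_pos ⟨k, rfl⟩]
        congr 1
        exact congrArg z (hι (Exists.choose_spec (⟨k, rfl⟩ : ∃ k', ι k' = ι k)))

lemma probOf_joint (hq : ∀ w, IsPMF (q w))
    (hp : p = fun ωf => π ωf.1 * ∏ i, q ωf.1 (ωf.2 i))
    {κ : Type*} [Fintype κ] [DecidableEq κ] (ι : κ → Fin (N + 1))
    (hι : Function.Injective ι) (w : 𝓦) (z : κ → 𝓩) :
    probOf p (fun ωf => (ωf.1, fun k => ωf.2 (ι k))) (w, z) = π w * ∏ k, q w (z k) := by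
  subst hp
  unfold probOf
  rw [Fintype.sum_prod_type]
  have hsplit : ∀ w', ∑ f : Fin (N+1) → 𝓩,
      (if ((w', fun k => f (ι k)) : 𝓦 × (κ → 𝓩)) = (w, z) then π w' * ∏ i, q w' (f i) else 0)
      = if w' = w then π w * ∏ k, q w (z k) else 0 := by
    intro w'
    by_cases h1 : w' = w
    · subst h1
      rw [if_pos rfl]
      have h2 : ∀ f : Fin (N+1) → 𝓩,
          (if ((w', fun k => f (ι k)) : 𝓦 × (κ → 𝓩)) = (w', z) then π w' * ∏ i, q w' (f i) else 0)
          = π w' * (if (fun k => f (ι k)) = z then ∏ i, q w' (f i) else 0) := by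
        intro f
        by_cases h3 : (fun k => f (ι k)) = z
        · simp [Prod.ext_iff, h3]
        · simp [Prod.ext_iff, h3]
      rw [Finset.sum_congr rfl fun f _ => h2 f, ← Finset.mul_sum,
        sum_indicator_prod hq ι hι]
    · rw [if_neg h1]
      apply Finset.sum_eq_zero
      intro f _
      rw [if_neg]
      simp [Prod.ext_iff, h1]
  rw [Finset.sum_congr rfl fun w' _ => hsplit w']
  simp

lemma probOf_marg (hq : ∀ w, IsPMF (q w))
    (hp : p = fun ωf => π ωf.1 * ∏ i, q ωf.1 (ωf.2 i))
    {κ : Type*} [Fintype κ] [DecidableEq κ] (ι : κ → Fin (N + 1))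
    (hι : Function.Injective ι) (z : κ → 𝓩) :
    probOf p (fun ωf => fun k => ωf.2 (ι k)) z = ∑ w, π w * ∏ k, q w (z k) := by
  calc probOf p (fun ωf => fun k => ωf.2 (ι k)) z
      = ∑ w, probOf p (fun ωf => (ωf.1, fun k => ωf.2 (ι k))) (w, z) :=
        probOf_snd (Prod.fst : 𝓦 × (Fin (N + 1) → 𝓩) → 𝓦) (fun ωf => fun k => ωf.2 (ι k)) z
    _ = ∑ w, π w * ∏ k, q w (z k) :=
        Finset.sum_congr rfl fun w _ => probOf_joint hq hp ι hι w z

lemma entropy_marg (hq : ∀ w, IsPMF (q w))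
    (hp : p = fun ωf => π ωf.1 * ∏ i, q ωf.1 (ωf.2 i))
    {κ : Type*} [Fintype κ] [DecidableEq κ] (ι : κ → Fin (N + 1))
    (hι : Function.Injective ι) :
    entropy p (fun ωf => fun k => ωf.2 (ι k)) = Bval π q (Fintype.card κ) := by
  rw [entropy_eq, Finset.sum_congr rfl fun z _ => by rw [probOf_marg hq hp ι hι]]
  unfold Bval
  apply Fintype.sum_equiv (Equiv.arrowCongr (Fintype.equivFin κ) (Equiv.refl 𝓩))
  intro z
  congr 1
  refine Finset.sum_congr rfl fun w _ => ?_
  congr 1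
  rw [← Equiv.prod_comp (Fintype.equivFin κ).symm fun k => q w (z k)]
  refine Finset.prod_congr rfl fun i _ => ?_
  simp [Equiv.arrowCongr]

lemma Jlem (hq : ∀ w, IsPMF (q w)) (m : ℕ) :
    ∑ w, ∑ z : Fin m → 𝓩, Real.negMulLog (π w * ∏ i, q w (z i))
      = (∑ w, Real.negMulLog (π w)) + m * ∑ w, π w * ∑ x, Real.negMulLog (q w x) := by
  induction m with
  | zero => simp
  | succ m ih =>
    have hPsum : ∀ w, ∑ zs : Fin m → 𝓩, ∏ i, q w (zs i) = 1 := by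
      intro w
      rw [← Fintype.prod_sum fun (_ : Fin m) j => q w j]
      simp [(hq w).2]
    have step : ∀ w, ∑ z : Fin (m+1) → 𝓩, Real.negMulLog (π w * ∏ i, q w (z i))
        = (∑ zs : Fin m → 𝓩, Real.negMulLog (π w * ∏ i, q w (zs i)))
          + π w * ∑ x, Real.negMulLog (q w x) := by
      intro w
      rw [← Equiv.sum_comp (Fin.consEquiv fun _ : Fin (m+1) => 𝓩)
        (fun f => Real.negMulLog (π w * ∏ i, q w (f i))), Fintype.sum_prod_type]
      have h1 : ∀ (x : 𝓩) (zs : Fin m → 𝓩),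
          Real.negMulLog (π w * ∏ i : Fin (m+1), q w ((Fin.consEquiv fun _ => 𝓩) (x, zs) i))
          = q w x * Real.negMulLog (π w * ∏ i, q w (zs i))
            + (π w * ∏ i, q w (zs i)) * Real.negMulLog (q w x) := by
        intro x zs
        have h2 : ∏ i : Fin (m+1), q w ((Fin.consEquiv fun _ => 𝓩) (x, zs) i)
            = q w x * ∏ i, q w (zs i) := by
          have hc : ((Fin.consEquiv fun _ : Fin (m+1) => 𝓩) (x, zs) : Fin (m+1) → 𝓩)
              = Fin.cons x zs := rfl
          rw [hc, Fin.prod_univ_succ]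
          simp
        rw [h2, show π w * (q w x * ∏ i, q w (zs i)) = (π w * ∏ i, q w (zs i)) * q w x by ring,
          Real.negMulLog_mul]
      rw [Finset.sum_congr rfl fun x _ => Finset.sum_congr rfl fun zs _ => h1 x zs]
      have h3 : ∀ x : 𝓩, ∑ zs : Fin m → 𝓩,
          (q w x * Real.negMulLog (π w * ∏ i, q w (zs i))
            + (π w * ∏ i, q w (zs i)) * Real.negMulLog (q w x))
          = q w x * (∑ zs : Fin m → 𝓩, Real.negMulLog (π w * ∏ i, q w (zs i)))
            + π w * Real.negMulLog (q w x) := by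
        intro x
        rw [Finset.sum_add_distrib, ← Finset.mul_sum, ← Finset.sum_mul, ← Finset.mul_sum,
          hPsum w]
        ring
      rw [Finset.sum_congr rfl fun x _ => h3 x, Finset.sum_add_distrib, ← Finset.sum_mul,
        (hq w).2, one_mul, ← Finset.mul_sum]
    rw [Finset.sum_congr rfl fun w _ => step w, Finset.sum_add_distrib, ih]
    push_cast
    ring

lemma entropy_joint (hq : ∀ w, IsPMF (q w))
    (hp : p = fun ωf => π ωf.1 * ∏ i, q ωf.1 (ωf.2 i))
    {κ : Type*} [Fintype κ] [DecidableEq κ] (ι : κ → Fin (N + 1))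
    (hι : Function.Injective ι) :
    entropy p (fun ωf => (ωf.1, fun k => ωf.2 (ι k)))
      = (∑ w, Real.negMulLog (π w))
        + (Fintype.card κ) * ∑ w, π w * ∑ x, Real.negMulLog (q w x) := by
  rw [entropy_eq, Fintype.sum_prod_type,
    Finset.sum_congr rfl fun w _ => Finset.sum_congr rfl fun z _ => by
      rw [probOf_joint hq hp ι hι w z]]
  rw [← Jlem hq (Fintype.card κ)]
  refine Finset.sum_congr rfl fun w _ => ?_
  apply Fintype.sum_equiv (Equiv.arrowCongr (Fintype.equivFin κ) (Equiv.refl 𝓩))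
  intro z
  congr 2
  rw [← Equiv.prod_comp (Fintype.equivFin κ).symm fun k => q w (z k)]
  refine Finset.prod_congr rfl fun i _ => ?_
  simp [Equiv.arrowCongr]

lemma entropy_comp2 {α β : Type*} [Fintype α] [DecidableEq α] [Fintype β] [DecidableEq β]
    {Ω' : Type*} [Fintype Ω'] {p' : Ω' → ℝ}
    (X : Ω' → α) {f : α → β} (hf : Function.Injective f) (V : Ω' → β)
    (hV : ∀ ω, V ω = f (X ω)) : entropy p' V = entropy p' X := by
  have h : V = fun ω => f (X ω) := funext hV
  subst h
  exact entropy_comp X hf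

lemma entropy_marg' (hq : ∀ w, IsPMF (q w))
    (hp : p = fun ωf => π ωf.1 * ∏ i, q ωf.1 (ωf.2 i))
    {κ : Type*} [Fintype κ] [DecidableEq κ] (ι : κ → Fin (N + 1))
    (hι : Function.Injective ι)
    {δ : Type*} [Fintype δ] [DecidableEq δ] (g : (κ → 𝓩) → δ)
    (hg : Function.Injective g)
    (V : 𝓦 × (Fin (N + 1) → 𝓩) → δ)
    (hV : ∀ ωf, V ωf = g (fun k => ωf.2 (ι k)))
    (m : ℕ) (hm : Fintype.card κ = m) :
    entropy p V = Bval π q m := by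
  subst hm
  have h1 := entropy_comp2 (p' := p) (fun ωf => fun k => ωf.2 (ι k)) hg V hV
  have h2 := entropy_marg hq hp ι hι
  exact h1.trans h2

lemma entropy_joint' (hq : ∀ w, IsPMF (q w))
    (hp : p = fun ωf => π ωf.1 * ∏ i, q ωf.1 (ωf.2 i))
    {κ : Type*} [Fintype κ] [DecidableEq κ] (ι : κ → Fin (N + 1))
    (hι : Function.Injective ι)
    {δ : Type*} [Fintype δ] [DecidableEq δ] (g : 𝓦 × (κ → 𝓩) → δ)
    (hg : Function.Injective g)
    (V : 𝓦 × (Fin (N + 1) → 𝓩) → δ)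
    (hV : ∀ ωf, V ωf = g (ωf.1, fun k => ωf.2 (ι k)))
    (m : ℕ) (hm : Fintype.card κ = m) :
    entropy p V = (∑ w, Real.negMulLog (π w))
        + m * ∑ w, π w * ∑ x, Real.negMulLog (q w x) := by
  subst hm
  have h1 := entropy_comp2 (p' := p) (fun ωf => ((ωf.1 : 𝓦), fun k => ωf.2 (ι k))) hg V hV
  have h2 := entropy_joint hq hp ι hι
  exact h1.trans h2

lemma Bval_zero (hπ : IsPMF π) : Bval π q 0 = 0 := by
  simp [Bval, hπ.2]

lemma condMI_inner (hπ : IsPMF π) (hq : ∀ w, IsPMF (q w))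
    (hp : p = fun ωf => π ωf.1 * ∏ i, q ωf.1 (ωf.2 i))
    (hN : 1 ≤ N) {n : ℕ} (h1 : 1 ≤ n) (h2 : n ≤ N) :
    condMI p (fun ωf => ωf.2 ⟨n % (N + 1), Nat.mod_lt _ (Nat.succ_pos N)⟩)
        (fun ωf => ωf.2 ⟨(n - 1) % (N + 1), Nat.mod_lt _ (Nat.succ_pos N)⟩)
        (fun ωf => fun i : Fin (n - 1) => ωf.2 ⟨i.val % (N + 1), Nat.mod_lt _ (Nat.succ_pos N)⟩)
      = 2 * Bval π q n - Bval π q (n - 1) - Bval π q (n + 1) := by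
  have hmn : n % (N + 1) = n := Nat.mod_eq_of_lt (by omega)
  have hmn1 : (n - 1) % (N + 1) = n - 1 := Nat.mod_eq_of_lt (by omega)
  have hmi : ∀ i : Fin (n - 1), i.val % (N + 1) = i.val := fun i =>
    Nat.mod_eq_of_lt (lt_of_lt_of_le i.isLt (by omega))
  have hι0 : Function.Injective (fun i : Fin (n - 1) =>
      (⟨i.val % (N + 1), Nat.mod_lt _ (Nat.succ_pos N)⟩ : Fin (N + 1))) := by
    intro a b hab
    simp only [Fin.mk.injEq, hmi] at hab
    exact Fin.ext hab
  have hι1 : Function.Injective (fun k : Option (Fin (n - 1)) =>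
      Option.elim k (⟨n % (N + 1), Nat.mod_lt _ (Nat.succ_pos N)⟩ : Fin (N + 1))
        (fun i => ⟨i.val % (N + 1), Nat.mod_lt _ (Nat.succ_pos N)⟩)) := by
    intro a b hab
    cases a with
    | none =>
      cases b with
      | none => rfl
      | some j =>
        exfalso
        simp only [Option.elim, Fin.mk.injEq, hmn, hmi] at hab
        have := j.isLt
        omega
    | some i =>
      cases b with
      | none =>
        exfalso
        simp only [Option.elim, Fin.mk.injEq, hmn, hmi] at hab
        have := i.isLt
        omega
      | some j =>
        simp only [Option.elim, Fin.mk.injEq, hmi] at hab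
        exact congrArg some (Fin.ext hab)
  have hι2 : Function.Injective (fun k : Option (Fin (n - 1)) =>
      Option.elim k (⟨(n - 1) % (N + 1), Nat.mod_lt _ (Nat.succ_pos N)⟩ : Fin (N + 1))
        (fun i => ⟨i.val % (N + 1), Nat.mod_lt _ (Nat.succ_pos N)⟩)) := by
    intro a b hab
    cases a with
    | none =>
      cases b with
      | none => rfl
      | some j =>
        exfalso
        simp only [Option.elim, Fin.mk.injEq, hmn1, hmi] at hab
        have := j.isLt
        omega
    | some i =>
      cases b with
      | none =>
        exfalso
        simp only [Option.elim, Fin.mk.injEq, hmn1, hmi] at hab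
        have := i.isLt
        omega
      | some j =>
        simp only [Option.elim, Fin.mk.injEq, hmi] at hab
        exact congrArg some (Fin.ext hab)
  have hι4 : Function.Injective (fun k : Option (Option (Fin (n - 1))) =>
      Option.elim k (⟨n % (N + 1), Nat.mod_lt _ (Nat.succ_pos N)⟩ : Fin (N + 1))
        (fun k' => Option.elim k' (⟨(n - 1) % (N + 1), Nat.mod_lt _ (Nat.succ_pos N)⟩ : Fin (N + 1))
          (fun i => ⟨i.val % (N + 1), Nat.mod_lt _ (Nat.succ_pos N)⟩))) := by
    intro a b hab
    cases a with
    | none =>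
      cases b with
      | none => rfl
      | some b' =>
        exfalso
        cases b' with
        | none =>
          simp only [Option.elim, Fin.mk.injEq, hmn, hmn1] at hab
          omega
        | some j =>
          simp only [Option.elim, Fin.mk.injEq, hmn, hmi] at hab
          have := j.isLt
          omega
    | some a' =>
      cases a' with
      | none =>
        cases b with
        | none =>
          exfalso
          simp only [Option.elim, Fin.mk.injEq, hmn, hmn1] at hab
          omega
        | some b' =>
          cases b' with
          | none => rfl
          | some j =>
            exfalso
            simp only [Option.elim, Fin.mk.injEq, hmn1, hmi] at hab
            have := j.isLt
            omega
      | some i =>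
        cases b with
        | none =>
          exfalso
          simp only [Option.elim, Fin.mk.injEq, hmn, hmi] at hab
          have := i.isLt
          omega
        | some b' =>
          cases b' with
          | none =>
            exfalso
            simp only [Option.elim, Fin.mk.injEq, hmn1, hmi] at hab
            have := i.isLt
            omega
          | some j =>
            simp only [Option.elim, Fin.mk.injEq, hmi] at hab
            exact congrArg some (congrArg some (Fin.ext hab))
  have hU3 := entropy_marg' hq hp
    (fun i : Fin (n - 1) => (⟨i.val % (N + 1), Nat.mod_lt _ (Nat.succ_pos N)⟩ : Fin (N + 1))) hι0
    (id : (Fin (n - 1) → 𝓩) → (Fin (n - 1) → 𝓩)) Function.injective_id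
    (fun ωf => fun i : Fin (n - 1) => ωf.2 ⟨i.val % (N + 1), Nat.mod_lt _ (Nat.succ_pos N)⟩)
    (fun _ => rfl) (n - 1) (by simp)
  have hU1 := entropy_marg' hq hp
    (fun k : Option (Fin (n - 1)) =>
      Option.elim k (⟨n % (N + 1), Nat.mod_lt _ (Nat.succ_pos N)⟩ : Fin (N + 1))
        (fun i => ⟨i.val % (N + 1), Nat.mod_lt _ (Nat.succ_pos N)⟩)) hι1
    (fun h : Option (Fin (n - 1)) → 𝓩 => (h none, fun i => h (some i)))
    (fun h1' h2' e => funext fun k => by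
      cases k with
      | none => exact congrArg Prod.fst e
      | some i => exact congrFun (congrArg Prod.snd e) i)
    (fun ωf => (ωf.2 ⟨n % (N + 1), Nat.mod_lt _ (Nat.succ_pos N)⟩,
      fun i : Fin (n - 1) => ωf.2 ⟨i.val % (N + 1), Nat.mod_lt _ (Nat.succ_pos N)⟩))
    (fun _ => rfl) n (by simp; omega)
  have hU2 := entropy_marg' hq hp
    (fun k : Option (Fin (n - 1)) =>
      Option.elim k (⟨(n - 1) % (N + 1), Nat.mod_lt _ (Nat.succ_pos N)⟩ : Fin (N + 1))
        (fun i => ⟨i.val % (N + 1), Nat.mod_lt _ (Nat.succ_pos N)⟩)) hι2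
    (fun h : Option (Fin (n - 1)) → 𝓩 => (h none, fun i => h (some i)))
    (fun h1' h2' e => funext fun k => by
      cases k with
      | none => exact congrArg Prod.fst e
      | some i => exact congrFun (congrArg Prod.snd e) i)
    (fun ωf => (ωf.2 ⟨(n - 1) % (N + 1), Nat.mod_lt _ (Nat.succ_pos N)⟩,
      fun i : Fin (n - 1) => ωf.2 ⟨i.val % (N + 1), Nat.mod_lt _ (Nat.succ_pos N)⟩))
    (fun _ => rfl) n (by simp; omega)
  have hU4 := entropy_marg' hq hp
    (fun k : Option (Option (Fin (n - 1))) =>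
      Option.elim k (⟨n % (N + 1), Nat.mod_lt _ (Nat.succ_pos N)⟩ : Fin (N + 1))
        (fun k' => Option.elim k' (⟨(n - 1) % (N + 1), Nat.mod_lt _ (Nat.succ_pos N)⟩ : Fin (N + 1))
          (fun i => ⟨i.val % (N + 1), Nat.mod_lt _ (Nat.succ_pos N)⟩))) hι4
    (fun h : Option (Option (Fin (n - 1))) → 𝓩 =>
      ((h none, h (some none)), fun i => h (some (some i))))
    (fun h1' h2' e => funext fun k => by
      cases k with
      | none => exact congrArg (fun t => t.1.1) e
      | some k' =>
        cases k' with
        | none => exact congrArg (fun t => t.1.2) e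
        | some i => exact congrFun (congrArg Prod.snd e) i)
    (fun ωf => ((ωf.2 ⟨n % (N + 1), Nat.mod_lt _ (Nat.succ_pos N)⟩,
        ωf.2 ⟨(n - 1) % (N + 1), Nat.mod_lt _ (Nat.succ_pos N)⟩),
      fun i : Fin (n - 1) => ωf.2 ⟨i.val % (N + 1), Nat.mod_lt _ (Nat.succ_pos N)⟩))
    (fun _ => rfl) (n + 1) (by simp; omega)
  simp only [condMI, condEntropy]
  rw [hU1, hU2, hU3, hU4]
  ring


end Model

lemma Ssum (B : ℕ → ℝ) (hB0 : B 0 = 0) (M : ℕ) :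
    ∑ n' ∈ Finset.Icc 1 M, ∑ n ∈ Finset.Icc n' M, (2 * B n - B (n - 1) - B (n + 1))
      = (M + 1 : ℝ) * B M - M * B (M + 1) := by
  induction M with
  | zero => simp [hB0]
  | succ M ih =>
    have hins : ∀ a : ℕ, a ≤ M + 1 →
        Finset.Icc a (M + 1) = insert (M + 1) (Finset.Icc a M) := fun a ha =>
      (Finset.insert_Icc_right_eq_Icc_add_one ha).symm
    rw [hins 1 (by omega), Finset.sum_insert (by simp), Finset.Icc_self,
      Finset.sum_singleton]
    have hinner : ∀ n' ∈ Finset.Icc 1 M,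
        ∑ n ∈ Finset.Icc n' (M + 1), (2 * B n - B (n - 1) - B (n + 1))
        = (∑ n ∈ Finset.Icc n' M, (2 * B n - B (n - 1) - B (n + 1)))
          + (2 * B (M + 1) - B M - B (M + 2)) := by
      intro n' hn'
      rw [Finset.mem_Icc] at hn'
      rw [hins n' (by omega), Finset.sum_insert (by simp)]
      rw [show M + 1 - 1 = M from rfl]
      ring
    rw [Finset.sum_congr rfl hinner, Finset.sum_add_distrib, ih, Finset.sum_const,
      Nat.card_Icc]
    rw [show M + 1 - 1 = M from rfl, show M + 1 + 1 = M + 2 from rfl, nsmul_eq_mul]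
    push_cast
    ring


/-- Corollary 1 (improved CMI bound): under the conditionally i.i.d. model,
`I(W; Z | Z^N) ≤ (1/N) I(W; Z^N) - (1/N) Σ_{n'=1}^{N-1} Σ_{n=n'}^{N-1} I(Z_{n+1}; Zₙ | Z^{n-1})`. -/
theorem cmi_improved_bound {𝓦 𝓩 : Type*} [Fintype 𝓦] [DecidableEq 𝓦] [Fintype 𝓩] [DecidableEq 𝓩]
    (N : ℕ) (hN : 1 ≤ N) (π : 𝓦 → ℝ) (q : 𝓦 → 𝓩 → ℝ)
    (hπ : IsPMF π) (hq : ∀ w, IsPMF (q w))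
    (p : 𝓦 × (Fin (N + 1) → 𝓩) → ℝ)
    (hp : p = fun ωf => π ωf.1 * ∏ i, q ωf.1 (ωf.2 i)) :
    condMI p (fun ωf => ωf.1) (fun ωf => ωf.2 (Fin.last N))
        (fun ωf => fun i : Fin N => ωf.2 i.castSucc)
      ≤ (1 / (N : ℝ)) * mutualInfo p (fun ωf => ωf.1) (fun ωf => fun i : Fin N => ωf.2 i.castSucc)
        - (1 / (N : ℝ)) * ∑ n' ∈ Finset.Icc 1 (N - 1), ∑ n ∈ Finset.Icc n' (N - 1),
            condMI p (fun ωf => ωf.2 ⟨n % (N + 1), Nat.mod_lt _ (Nat.succ_pos N)⟩)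
              (fun ωf => ωf.2 ⟨(n - 1) % (N + 1), Nat.mod_lt _ (Nat.succ_pos N)⟩)
              (fun ωf => fun i : Fin (n - 1) => ωf.2 ⟨i.val % (N + 1), Nat.mod_lt _ (Nat.succ_pos N)⟩) := by

  have hpmf : IsPMF p := isPMF_model hπ hq hp
  have hT1 := entropy_joint' hq hp Fin.castSucc (Fin.castSucc_injective N)
    (id : 𝓦 × (Fin N → 𝓩) → 𝓦 × (Fin N → 𝓩)) Function.injective_id
    (fun ωf => (ωf.1, fun i : Fin N => ωf.2 i.castSucc)) (fun _ => rfl) N (by simp)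
  have hT2 := entropy_marg' hq hp Fin.castSucc (Fin.castSucc_injective N)
    (id : (Fin N → 𝓩) → (Fin N → 𝓩)) Function.injective_id
    (fun ωf => fun i : Fin N => ωf.2 i.castSucc) (fun _ => rfl) N (by simp)
  have hιO : Function.Injective
      (fun k : Option (Fin N) => Option.elim k (Fin.last N) Fin.castSucc) := by
    intro a b hab
    cases a with
    | none =>
      cases b with
      | none => rfl
      | some j =>
        exfalso
        have h := congrArg Fin.val hab
        simp only [Option.elim, Fin.val_last, Fin.coe_castSucc] at h
        have := j.isLt
        omega
    | some i =>
      cases b with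
      | none =>
        exfalso
        have h := congrArg Fin.val hab
        simp only [Option.elim, Fin.val_last, Fin.coe_castSucc] at h
        have := i.isLt
        omega
      | some j =>
        exact congrArg some (Fin.castSucc_injective N hab)
  have hT3 := entropy_marg' hq hp
    (fun k : Option (Fin N) => Option.elim k (Fin.last N) Fin.castSucc) hιO
    (fun h : Option (Fin N) → 𝓩 => (h none, fun i => h (some i)))
    (fun h1' h2' e => funext fun k => by
      cases k with
      | none => exact congrArg Prod.fst e
      | some i => exact congrFun (congrArg Prod.snd e) i)
    (fun ωf => (ωf.2 (Fin.last N), fun i : Fin N => ωf.2 i.castSucc))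
    (fun _ => rfl) (N + 1) (by simp)
  have hT4 := entropy_joint' hq hp
    (fun k : Option (Fin N) => Option.elim k (Fin.last N) Fin.castSucc) hιO
    (fun wh : 𝓦 × (Option (Fin N) → 𝓩) => ((wh.1, wh.2 none), fun i => wh.2 (some i)))
    (fun a b e => by
      rcases a with ⟨a1, a2⟩
      rcases b with ⟨b1, b2⟩
      simp only [Prod.mk.injEq]
      refine ⟨congrArg (fun t => t.1.1) e, funext fun k => ?_⟩
      cases k with
      | none => exact congrArg (fun t => t.1.2) e
      | some i => exact congrFun (congrArg Prod.snd e) i)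
    (fun ωf => ((ωf.1, ωf.2 (Fin.last N)), fun i : Fin N => ωf.2 i.castSucc))
    (fun _ => rfl) (N + 1) (by simp)
  have hW := entropy_joint' hq hp (Fin.elim0 : Fin 0 → Fin (N + 1)) (fun a => a.elim0)
    (Prod.fst : 𝓦 × (Fin 0 → 𝓩) → 𝓦)
    (fun a b e => by
      rcases a with ⟨a1, a2⟩
      rcases b with ⟨b1, b2⟩
      simp only [Prod.mk.injEq]
      exact ⟨e, Subsingleton.elim _ _⟩)
    (fun ωf => ωf.1) (fun _ => rfl) 0 (by simp)
  have hLHS : condMI p (fun ωf => ωf.1) (fun ωf => ωf.2 (Fin.last N))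
      (fun ωf => fun i : Fin N => ωf.2 i.castSucc)
      = Bval π q (N + 1) - Bval π q N - (∑ w, π w * ∑ x, Real.negMulLog (q w x)) := by
    simp only [condMI, condEntropy]
    rw [hT1, hT2, hT3, hT4]
    push_cast
    ring
  have hMI : mutualInfo p (fun ωf => ωf.1) (fun ωf => fun i : Fin N => ωf.2 i.castSucc)
      = Bval π q N - (N : ℝ) * (∑ w, π w * ∑ x, Real.negMulLog (q w x)) := by
    simp only [mutualInfo]
    rw [hW, hT2, hT1]
    push_cast
    ring
  have hrw : ∀ n' ∈ Finset.Icc 1 (N - 1), ∀ n ∈ Finset.Icc n' (N - 1),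
      condMI p (fun ωf => ωf.2 ⟨n % (N + 1), Nat.mod_lt _ (Nat.succ_pos N)⟩)
        (fun ωf => ωf.2 ⟨(n - 1) % (N + 1), Nat.mod_lt _ (Nat.succ_pos N)⟩)
        (fun ωf => fun i : Fin (n - 1) => ωf.2 ⟨i.val % (N + 1), Nat.mod_lt _ (Nat.succ_pos N)⟩)
      = 2 * Bval π q n - Bval π q (n - 1) - Bval π q (n + 1) := by
    intro n' hn' n hn
    rw [Finset.mem_Icc] at hn' hn
    exact condMI_inner hπ hq hp hN (by omega) (by omega)
  have hS : (∑ n' ∈ Finset.Icc 1 (N - 1), ∑ n ∈ Finset.Icc n' (N - 1),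
      condMI p (fun ωf => ωf.2 ⟨n % (N + 1), Nat.mod_lt _ (Nat.succ_pos N)⟩)
        (fun ωf => ωf.2 ⟨(n - 1) % (N + 1), Nat.mod_lt _ (Nat.succ_pos N)⟩)
        (fun ωf => fun i : Fin (n - 1) => ωf.2 ⟨i.val % (N + 1), Nat.mod_lt _ (Nat.succ_pos N)⟩))
      = (N : ℝ) * Bval π q (N - 1) - ((N : ℝ) - 1) * Bval π q N := by
    rw [Finset.sum_congr rfl fun n' hn' =>
      Finset.sum_congr rfl fun n hn => hrw n' hn' n hn]
    rw [Ssum (Bval π q) (Bval_zero hπ) (N - 1)]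
    rw [show N - 1 + 1 = N from by omega, Nat.cast_sub hN]
    push_cast
    ring
  have hconc : 0 ≤ 2 * Bval π q N - Bval π q (N - 1) - Bval π q (N + 1) := by
    have h0 := condMI_nonneg hpmf
      (fun ωf : 𝓦 × (Fin (N + 1) → 𝓩) => ωf.2 ⟨N % (N + 1), Nat.mod_lt _ (Nat.succ_pos N)⟩)
      (fun ωf => ωf.2 ⟨(N - 1) % (N + 1), Nat.mod_lt _ (Nat.succ_pos N)⟩)
      (fun ωf => fun i : Fin (N - 1) => ωf.2 ⟨i.val % (N + 1), Nat.mod_lt _ (Nat.succ_pos N)⟩)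
    rw [condMI_inner (n := N) hπ hq hp hN hN le_rfl] at h0
    exact h0
  rw [hLHS, hMI, hS]
  have hN1R : (1 : ℝ) ≤ (N : ℝ) := by exact_mod_cast hN
  have hNne : (N : ℝ) ≠ 0 := by linarith
  have key : 1 / (N : ℝ) * (Bval π q N - (N : ℝ) * (∑ w, π w * ∑ x, Real.negMulLog (q w x)))
      - 1 / (N : ℝ) * ((N : ℝ) * Bval π q (N - 1) - ((N : ℝ) - 1) * Bval π q N)
      = (Bval π q (N + 1) - Bval π q N - (∑ w, π w * ∑ x, Real.negMulLog (q w x)))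
        + (2 * Bval π q N - Bval π q (N - 1) - Bval π q (N + 1)) := by
    field_simp
    ring
  linarith [key, hconc]
end

section
/- Let W, Z₁,…,Z_N, Z be finite-valued random variables, conditionally i.i.d. given W. Then I(W; Z | Z^N) ≤ (1/N) I(W; Z^N). -/
set_option linter.unusedSectionVars false
set_option linter.unusedVariables false
set_option maxHeartbeats 1000000


open Finset

private lemma gibbs {ι : Type*} [Fintype ι] (a b : ι → ℝ) (ha : ∀ i, 0 ≤ a i)
    (hb : ∀ i, 0 ≤ b i) (hab : ∀ i, b i = 0 → a i = 0) (h : ∑ i, b i ≤ ∑ i, a i) :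
    ∑ i, a i * Real.log (b i / a i) ≤ 0 := by
  have hterm : ∀ i, a i * Real.log (b i / a i) ≤ b i - a i := by
    intro i
    rcases eq_or_lt_of_le (ha i) with h0 | h0
    · rw [← h0]; simpa using hb i
    · have hbpos : 0 < b i :=
        lt_of_le_of_ne (hb i) (fun e => (ne_of_gt h0) (hab i e.symm))
      have hdiv : 0 < b i / a i := div_pos hbpos h0
      calc a i * Real.log (b i / a i) ≤ a i * (b i / a i - 1) :=
            mul_le_mul_of_nonneg_left (Real.log_le_sub_one_of_pos hdiv) h0.le
        _ = b i - a i := by field_simp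
  calc ∑ i, a i * Real.log (b i / a i) ≤ ∑ i, (b i - a i) :=
        Finset.sum_le_sum fun i _ => hterm i
    _ = ∑ i, b i - ∑ i, a i := Finset.sum_sub_distrib _ _
    _ ≤ 0 := by linarith

private lemma submod {A B C : Type*} [Fintype A] [Fintype B] [Fintype C]
    (R : A → B → C → ℝ) (hR : ∀ a b c, 0 ≤ R a b c) :
    (∑ a, ∑ b, (∑ c, R a b c) * Real.log (∑ c, R a b c))
      + (∑ a, ∑ c, (∑ b, R a b c) * Real.log (∑ b, R a b c))
    ≤ (∑ a, ∑ b, ∑ c, R a b c * Real.log (R a b c))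
      + (∑ a, (∑ b, ∑ c, R a b c) * Real.log (∑ b, ∑ c, R a b c)) := by
  classical
  set AB : A → B → ℝ := fun a b => ∑ c, R a b c with hAB
  set AC : A → C → ℝ := fun a c => ∑ b, R a b c with hAC
  set SA : A → ℝ := fun a => ∑ b, ∑ c, R a b c with hSA
  have hABnn : ∀ a b, 0 ≤ AB a b := fun a b => Finset.sum_nonneg fun c _ => hR a b c
  have hACnn : ∀ a c, 0 ≤ AC a c := fun a c => Finset.sum_nonneg fun b _ => hR a b c
  have hSAnn : ∀ a, 0 ≤ SA a := fun a => Finset.sum_nonneg fun b _ => hABnn a b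
  have hRAB : ∀ a b c, R a b c ≤ AB a b := fun a b c =>
    Finset.single_le_sum (fun c _ => hR a b c) (Finset.mem_univ c)
  have hRAC : ∀ a b c, R a b c ≤ AC a c := fun a b c =>
    Finset.single_le_sum (f := fun b => R a b c) (fun b _ => hR a b c) (Finset.mem_univ b)
  have hABSA : ∀ a b, AB a b ≤ SA a := fun a b =>
    Finset.single_le_sum (f := fun b => AB a b) (fun b _ => hABnn a b) (Finset.mem_univ b)
  have hACSA : ∀ a c, AC a c ≤ SA a := by
    intro a c
    have : SA a = ∑ c, AC a c := Finset.sum_comm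
    rw [this]
    exact Finset.single_le_sum (f := fun c => AC a c) (fun c _ => hACnn a c) (Finset.mem_univ c)
  -- the Gibbs step
  have key : ∑ x : A × B × C, (R x.1 x.2.1 x.2.2) *
      Real.log ((AB x.1 x.2.1 * AC x.1 x.2.2 / SA x.1) / R x.1 x.2.1 x.2.2) ≤ 0 := by
    apply gibbs
    · exact fun x => hR _ _ _
    · exact fun x => div_nonneg (mul_nonneg (hABnn _ _) (hACnn _ _)) (hSAnn _)
    · intro x hx
      by_contra h
      have hpos : 0 < R x.1 x.2.1 x.2.2 := lt_of_le_of_ne (hR _ _ _) (Ne.symm h)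
      have h1 : 0 < AB x.1 x.2.1 := lt_of_lt_of_le hpos (hRAB _ _ _)
      have h2 : 0 < AC x.1 x.2.2 := lt_of_lt_of_le hpos (hRAC _ _ _)
      have h3 : 0 < SA x.1 := lt_of_lt_of_le h1 (hABSA _ _)
      have hgt : 0 < AB x.1 x.2.1 * AC x.1 x.2.2 / SA x.1 := div_pos (mul_pos h1 h2) h3
      rw [hx] at hgt; exact lt_irrefl 0 hgt
    · simp only [Fintype.sum_prod_type]
      have hb : ∀ a, ∑ b, ∑ c, AB a b * AC a c / SA a ≤ SA a := by
        intro a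
        have hSAc : ∑ c, AC a c = SA a := by
          rw [hSA, hAC]; exact Finset.sum_comm
        have e1 : ∀ b, ∑ c, AB a b * AC a c / SA a = AB a b * (SA a / SA a) := by
          intro b
          rw [← Finset.sum_div, ← Finset.mul_sum, hSAc, mul_div_assoc]
        rw [Finset.sum_congr rfl fun b _ => e1 b, ← Finset.sum_mul]
        rcases eq_or_lt_of_le (hSAnn a) with h0 | h0
        · rw [← h0]; simp
        · rw [div_self (ne_of_gt h0), mul_one]
      calc ∑ a, ∑ b, ∑ c, AB a b * AC a c / SA a ≤ ∑ a, SA a :=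
            Finset.sum_le_sum fun a _ => hb a
        _ = ∑ a, ∑ b, ∑ c, R a b c := rfl
  -- pointwise log expansion
  have point : ∀ a b c, R a b c * Real.log ((AB a b * AC a c / SA a) / R a b c)
      = R a b c * Real.log (AB a b) + R a b c * Real.log (AC a c)
        - R a b c * Real.log (SA a) - R a b c * Real.log (R a b c) := by
    intro a b c
    rcases eq_or_lt_of_le (hR a b c) with h0 | h0
    · rw [← h0]; ring
    · have h1 : 0 < AB a b := lt_of_lt_of_le h0 (hRAB a b c)
      have h2 : 0 < AC a c := lt_of_lt_of_le h0 (hRAC a b c)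
      have h3 : 0 < SA a := lt_of_lt_of_le h1 (hABSA a b)
      rw [Real.log_div (by positivity) (ne_of_gt h0),
        Real.log_div (ne_of_gt (mul_pos h1 h2)) (ne_of_gt h3),
        Real.log_mul (ne_of_gt h1) (ne_of_gt h2)]
      ring
  rw [Fintype.sum_prod_type] at key
  simp only [Fintype.sum_prod_type] at key
  rw [Finset.sum_congr rfl (fun a _ => Finset.sum_congr rfl (fun b _ =>
    Finset.sum_congr rfl (fun c _ => point a b c)))] at key
  simp only [Finset.sum_add_distrib, Finset.sum_sub_distrib] at key
  -- marginalize the three mixed sums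
  have S1 : ∑ a, ∑ b, ∑ c, R a b c * Real.log (AB a b)
      = ∑ a, ∑ b, AB a b * Real.log (AB a b) := by
    refine Finset.sum_congr rfl fun a _ => Finset.sum_congr rfl fun b _ => ?_
    rw [← Finset.sum_mul]
  have S2 : ∑ a, ∑ b, ∑ c, R a b c * Real.log (AC a c)
      = ∑ a, ∑ c, AC a c * Real.log (AC a c) := by
    refine Finset.sum_congr rfl fun a _ => ?_
    rw [Finset.sum_comm]
    refine Finset.sum_congr rfl fun c _ => ?_
    rw [← Finset.sum_mul]
  have S3 : ∑ a, ∑ b, ∑ c, R a b c * Real.log (SA a)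
      = ∑ a, SA a * Real.log (SA a) := by
    refine Finset.sum_congr rfl fun a _ => ?_
    rw [Finset.sum_congr rfl fun b (_ : b ∈ univ) => (Finset.sum_mul ..).symm,
      ← Finset.sum_mul]
  rw [S1, S2, S3] at key
  linarith

section XR
variable {𝓦 𝓩 : Type*} [Fintype 𝓦] [DecidableEq 𝓦] [Fintype 𝓩] [DecidableEq 𝓩]

/-- Mixture-of-products marginal on `Fin k → 𝓩`. -/
private noncomputable def Pz (π : 𝓦 → ℝ) (q : 𝓦 → 𝓩 → ℝ) (k : ℕ) (f : Fin k → 𝓩) : ℝ :=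
  ∑ w, π w * ∏ i, q w (f i)

/-- `∑ P log P` for the marginal on `Fin k → 𝓩`. -/
private noncomputable def sS (π : 𝓦 → ℝ) (q : 𝓦 → 𝓩 → ℝ) (k : ℕ) : ℝ :=
  ∑ f : Fin k → 𝓩, Pz π q k f * Real.log (Pz π q k f)

private def snocEquiv (𝓩 : Type*) (k : ℕ) : ((Fin k → 𝓩) × 𝓩) ≃ (Fin (k+1) → 𝓩) where
  toFun p := Fin.snoc p.1 p.2
  invFun g := (fun i => g i.castSucc, g (Fin.last k))
  left_inv p := by
    refine Prod.ext ?_ ?_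
    · funext i; simp
    · simp
  right_inv g := by
    funext i
    induction i using Fin.lastCases with
    | last => simp
    | cast i => simp

private lemma sum_snoc {M : Type*} [AddCommMonoid M] (k : ℕ) (F : (Fin (k+1) → 𝓩) → M) :
    ∑ g : Fin (k+1) → 𝓩, F g = ∑ f : Fin k → 𝓩, ∑ z, F (Fin.snoc f z) := by
  have h := Fintype.sum_equiv (snocEquiv 𝓩 k) (fun p => F (Fin.snoc p.1 p.2)) F fun p => rfl
  rw [← h]
  exact Fintype.sum_prod_type (f := fun p => F (Fin.snoc p.1 p.2))

private lemma prod_snoc (q : 𝓦 → 𝓩 → ℝ) (k : ℕ) (w : 𝓦) (f : Fin k → 𝓩) (z : 𝓩) :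
    ∏ i : Fin (k+1), q w ((Fin.snoc f z : Fin (k+1) → 𝓩) i) = (∏ i : Fin k, q w (f i)) * q w z := by
  rw [Fin.prod_univ_castSucc]
  simp

private lemma sum_prod_one (q : 𝓦 → 𝓩 → ℝ) (hq : ∀ w, IsPMF (q w)) (w : 𝓦) (k : ℕ) :
    ∑ f : Fin k → 𝓩, ∏ i, q w (f i) = 1 := by
  rw [← Fintype.prod_sum]
  simp [(hq w).2]

private lemma Pz_snoc (π : 𝓦 → ℝ) (q : 𝓦 → 𝓩 → ℝ) (k : ℕ) (f : Fin k → 𝓩) (z : 𝓩) :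
    Pz π q (k+1) (Fin.snoc f z) = ∑ w, π w * ((∏ i, q w (f i)) * q w z) := by
  unfold Pz
  exact Finset.sum_congr rfl fun w _ => by rw [prod_snoc]

private lemma sS_convex (π : 𝓦 → ℝ) (q : 𝓦 → 𝓩 → ℝ)
    (hπ : IsPMF π) (hq : ∀ w, IsPMF (q w)) (n : ℕ) :
    2 * sS π q (n+1) ≤ sS π q (n+2) + sS π q n := by
  set R : (Fin n → 𝓩) → 𝓩 → 𝓩 → ℝ :=
    fun f b c => ∑ w, π w * ((∏ i, q w (f i)) * (q w b * q w c)) with hRdef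
  have hRnn : ∀ f b c, 0 ≤ R f b c := fun f b c =>
    Finset.sum_nonneg fun w _ => mul_nonneg (hπ.1 w) (mul_nonneg
      (Finset.prod_nonneg fun i _ => (hq w).1 _) (mul_nonneg ((hq w).1 _) ((hq w).1 _)))
  have h1 : ∀ f b, (∑ c, R f b c) = Pz π q (n+1) (Fin.snoc f b) := by
    intro f b
    rw [Pz_snoc, Finset.sum_comm]
    refine Finset.sum_congr rfl fun w _ => ?_
    rw [Finset.sum_congr rfl fun c (_ : c ∈ univ) =>
      show π w * ((∏ i, q w (f i)) * (q w b * q w c))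
        = (π w * ((∏ i, q w (f i)) * q w b)) * q w c by ring,
      ← Finset.mul_sum, (hq w).2, mul_one]
  have h2 : ∀ f c, (∑ b, R f b c) = Pz π q (n+1) (Fin.snoc f c) := by
    intro f c
    rw [Pz_snoc, Finset.sum_comm]
    refine Finset.sum_congr rfl fun w _ => ?_
    rw [Finset.sum_congr rfl fun b (_ : b ∈ univ) =>
      show π w * ((∏ i, q w (f i)) * (q w b * q w c))
        = (π w * ((∏ i, q w (f i)) * q w c)) * q w b by ring,
      ← Finset.mul_sum, (hq w).2, mul_one]
  have h3 : ∀ f, (∑ b, ∑ c, R f b c) = Pz π q n f := by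
    intro f
    rw [Finset.sum_congr rfl fun b (_ : b ∈ univ) => h1 f b]
    unfold Pz
    rw [Finset.sum_comm]
    refine Finset.sum_congr rfl fun w _ => ?_
    rw [Finset.sum_congr rfl fun b (_ : b ∈ univ) =>
      show π w * ∏ i : Fin (n+1), q w ((Fin.snoc f b : Fin (n+1) → 𝓩) i)
        = (π w * ∏ i, q w (f i)) * q w b by rw [prod_snoc]; ring,
      ← Finset.mul_sum, (hq w).2, mul_one]
  have h4 : ∀ f b c, R f b c = Pz π q (n+2) (Fin.snoc (Fin.snoc f b) c) := by
    intro f b c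
    rw [Pz_snoc]
    refine Finset.sum_congr rfl fun w _ => ?_
    rw [prod_snoc]
    ring
  have key := submod R hRnn
  -- rewrite the four blocks
  have eAB : (∑ f, ∑ b, (∑ c, R f b c) * Real.log (∑ c, R f b c)) = sS π q (n+1) := by
    rw [Finset.sum_congr rfl fun f (_ : f ∈ univ) => Finset.sum_congr rfl
      fun b (_ : b ∈ univ) => by rw [h1 f b]]
    exact (sum_snoc n fun g => Pz π q (n+1) g * Real.log (Pz π q (n+1) g)).symm
  have eAC : (∑ f, ∑ c, (∑ b, R f b c) * Real.log (∑ b, R f b c)) = sS π q (n+1) := by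
    rw [Finset.sum_congr rfl fun f (_ : f ∈ univ) => Finset.sum_congr rfl
      fun c (_ : c ∈ univ) => by rw [h2 f c]]
    exact (sum_snoc n fun g => Pz π q (n+1) g * Real.log (Pz π q (n+1) g)).symm
  have eA : (∑ f, (∑ b, ∑ c, R f b c) * Real.log (∑ b, ∑ c, R f b c)) = sS π q n := by
    refine Finset.sum_congr rfl fun f _ => by rw [h3 f]
  have eABC : (∑ f, ∑ b, ∑ c, R f b c * Real.log (R f b c)) = sS π q (n+2) := by
    rw [Finset.sum_congr rfl fun f (_ : f ∈ univ) => Finset.sum_congr rfl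
      fun b (_ : b ∈ univ) => Finset.sum_congr rfl fun c (_ : c ∈ univ) => by rw [h4 f b c]]
    rw [show sS π q (n+2) = ∑ g : Fin (n+2) → 𝓩, Pz π q (n+2) g * Real.log (Pz π q (n+2) g)
        from rfl,
      sum_snoc (n+1) fun g => Pz π q (n+2) g * Real.log (Pz π q (n+2) g),
      sum_snoc n fun g => ∑ z, Pz π q (n+2) (Fin.snoc g z) *
        Real.log (Pz π q (n+2) (Fin.snoc g z))]
  rw [eAB, eAC, eA, eABC] at key
  linarith

private lemma sS_zero (π : 𝓦 → ℝ) (q : 𝓦 → 𝓩 → ℝ) (hπ : IsPMF π) :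
    sS π q 0 = (0 : ℝ) := by
  unfold sS Pz
  have h1 : ∀ f : Fin 0 → 𝓩, ∑ w, π w * ∏ i, q w (f i) = 1 := by
    intro f
    simp [hπ.2]
  rw [Finset.sum_congr rfl fun f (_ : f ∈ univ) => by rw [h1 f]]
  simp

private lemma han (π : 𝓦 → ℝ) (q : 𝓦 → 𝓩 → ℝ)
    (hπ : IsPMF π) (hq : ∀ w, IsPMF (q w)) (N : ℕ) :
    ((N : ℝ) + 1) * sS π q N ≤ (N : ℝ) * sS π q (N + 1) := by
  set d : ℕ → ℝ := fun n => sS π q (n + 1) - sS π q n with hd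
  have hmono : Monotone d := by
    apply monotone_nat_of_le_succ
    intro n
    have := sS_convex π q hπ hq n
    simp only [hd]
    linarith
  have htel : ∑ i ∈ Finset.range N, d i = sS π q N := by
    rw [Finset.sum_range_sub (fun n => sS π q n) N, sS_zero π q hπ, sub_zero]
  have hbound : ∑ i ∈ Finset.range N, d i ≤ (N : ℝ) * d N := by
    calc ∑ i ∈ Finset.range N, d i ≤ ∑ _i ∈ Finset.range N, d N :=
          Finset.sum_le_sum fun i hi => hmono (le_of_lt (Finset.mem_range.mp hi))
      _ = (N : ℝ) * d N := by
        rw [Finset.sum_const, Finset.card_range, nsmul_eq_mul]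
  rw [htel] at hbound
  simp only [hd] at hbound
  nlinarith [hbound]

private lemma marg_log (q : 𝓦 → 𝓩 → ℝ) (hq : ∀ w, IsPMF (q w)) (w : 𝓦) (k : ℕ) (j : Fin k) :
    ∑ f : Fin k → 𝓩, (∏ i, q w (f i)) * Real.log (q w (f j))
      = ∑ z, q w z * Real.log (q w z) := by
  have e : ∀ f : Fin k → 𝓩, (∏ i, q w (f i)) * Real.log (q w (f j))
      = ∏ i, (if i = j then q w (f i) * Real.log (q w (f i)) else q w (f i)) := by
    intro f
    rw [Finset.prod_congr rfl fun i (_ : i ∈ univ) =>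
      show (if i = j then q w (f i) * Real.log (q w (f i)) else q w (f i))
        = q w (f i) * (if i = j then Real.log (q w (f i)) else 1) by
          split_ifs <;> simp,
      Finset.prod_mul_distrib, Finset.prod_ite_eq' univ j fun i => Real.log (q w (f i))]
    simp [mul_comm]
  rw [Finset.sum_congr rfl fun f (_ : f ∈ univ) => e f,
    ← Fintype.prod_sum (fun (i : Fin k) (z : 𝓩) =>
      if i = j then q w z * Real.log (q w z) else q w z),
    Finset.prod_congr rfl fun i (_ : i ∈ univ) =>
      show (∑ z, if i = j then q w z * Real.log (q w z) else q w z)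
        = if i = j then ∑ z, q w z * Real.log (q w z) else 1 by
          split_ifs with h
          · rfl
          · exact (hq w).2,
    Finset.prod_ite_eq' univ j fun _ => ∑ z, q w z * Real.log (q w z)]
  simp

private lemma splitlog (x : ℝ) (k : ℕ) (t : Fin k → ℝ) :
    (x * ∏ j, t j) * Real.log (x * ∏ j, t j)
      = (x * ∏ j, t j) * Real.log x + ∑ j, (x * ∏ j, t j) * Real.log (t j) := by
  by_cases h : x * ∏ j, t j = 0
  · simp [h]
  · have hx : x ≠ 0 := fun e => h (by rw [e, zero_mul])
    have hp : (∏ j, t j) ≠ 0 := fun e => h (by rw [e, mul_zero])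
    have ht : ∀ j : Fin k, t j ≠ 0 := fun j e =>
      hp (Finset.prod_eq_zero (Finset.mem_univ j) e)
    rw [Real.log_mul hx hp, Real.log_prod (fun j (_ : j ∈ (univ : Finset (Fin k))) => ht j), mul_add,
      Finset.mul_sum]

private lemma sum_J_log (π : 𝓦 → ℝ) (q : 𝓦 → 𝓩 → ℝ)
    (hπ : IsPMF π) (hq : ∀ w, IsPMF (q w)) (k : ℕ) :
    ∑ w, ∑ f : Fin k → 𝓩, (π w * ∏ i, q w (f i)) * Real.log (π w * ∏ i, q w (f i))
      = (∑ w, π w * Real.log (π w))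
        + (k : ℝ) * (∑ w, π w * ∑ z, q w z * Real.log (q w z)) := by
  have perw : ∀ w, ∑ f : Fin k → 𝓩, (π w * ∏ i, q w (f i)) * Real.log (π w * ∏ i, q w (f i))
      = π w * Real.log (π w) + (k : ℝ) * (π w * ∑ z, q w z * Real.log (q w z)) := by
    intro w
    rw [Finset.sum_congr rfl fun f (_ : f ∈ univ) =>
      splitlog (π w) k (fun i => q w (f i)), Finset.sum_add_distrib]
    congr 1
    · rw [Finset.sum_congr rfl fun f (_ : f ∈ univ) =>
        show (π w * ∏ i, q w (f i)) * Real.log (π w)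
          = (π w * Real.log (π w)) * ∏ i, q w (f i) by ring,
        ← Finset.mul_sum, sum_prod_one q hq w k, mul_one]
    · rw [Finset.sum_comm]
      have hj : ∀ j : Fin k, ∑ f : Fin k → 𝓩, (π w * ∏ i, q w (f i)) * Real.log (q w (f j))
          = π w * ∑ z, q w z * Real.log (q w z) := by
        intro j
        rw [Finset.sum_congr rfl fun f (_ : f ∈ univ) =>
          show (π w * ∏ i, q w (f i)) * Real.log (q w (f j))
            = π w * ((∏ i, q w (f i)) * Real.log (q w (f j))) by ring,
          ← Finset.mul_sum, marg_log q hq w k j]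
      rw [Finset.sum_congr rfl fun j (_ : j ∈ univ) => hj j, Finset.sum_const,
        Finset.card_univ, Fintype.card_fin, nsmul_eq_mul]
  rw [Finset.sum_congr rfl fun w (_ : w ∈ univ) => perw w, Finset.sum_add_distrib,
    ← Finset.mul_sum]

private lemma prefix_snoc (k : ℕ) (f : Fin k → 𝓩) (z : 𝓩) :
    (fun i : Fin k => (Fin.snoc f z : Fin (k+1) → 𝓩) i.castSucc) = f := by
  funext i; simp

private lemma probOf_std {α : Type*} [DecidableEq α] (π : 𝓦 → ℝ) (q : 𝓦 → 𝓩 → ℝ) (N : ℕ)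
    (X : 𝓦 × (Fin (N+1) → 𝓩) → α) (x : α) :
    probOf (fun ωf : 𝓦 × (Fin (N+1) → 𝓩) => π ωf.1 * ∏ i, q ωf.1 (ωf.2 i)) X x
      = ∑ w, ∑ f : Fin N → 𝓩, ∑ z,
          (if X (w, Fin.snoc f z) = x then π w * ((∏ i, q w (f i)) * q w z) else 0) := by
  unfold probOf
  rw [Fintype.sum_prod_type]
  refine Finset.sum_congr rfl fun w _ => ?_
  rw [sum_snoc N (fun g => if X (w, g) = x then π w * ∏ i, q w (g i) else 0)]
  refine Finset.sum_congr rfl fun f _ => Finset.sum_congr rfl fun z _ => ?_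
  rw [prod_snoc]

variable (π : 𝓦 → ℝ) (q : 𝓦 → 𝓩 → ℝ) (N : ℕ)

private lemma probOf_W (hq : ∀ w, IsPMF (q w)) (w0 : 𝓦) :
    probOf (fun ωf : 𝓦 × (Fin (N+1) → 𝓩) => π ωf.1 * ∏ i, q ωf.1 (ωf.2 i))
      (fun ωf => ωf.1) w0 = π w0 := by
  rw [probOf_std]
  have hw : ∀ w, (∑ f : Fin N → 𝓩, ∑ z,
      if (w, (Fin.snoc f z : Fin (N+1) → 𝓩)).1 = w0
        then π w * ((∏ i, q w (f i)) * q w z) else 0)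
      = if w = w0 then π w else 0 := by
    intro w
    simp only [Prod.fst]
    split_ifs with h
    · rw [Finset.sum_congr rfl fun f (_ : f ∈ univ) => by
        rw [Finset.sum_congr rfl fun z (_ : z ∈ univ) =>
          show (π w * ((∏ i, q w (f i)) * q w z)) = (π w * ∏ i, q w (f i)) * q w z by ring,
          ← Finset.mul_sum, (hq w).2, mul_one],
        ← Finset.mul_sum, sum_prod_one q hq w N, mul_one]
    · simp
  rw [Finset.sum_congr rfl fun w (_ : w ∈ univ) => hw w, Finset.sum_ite_eq' univ w0 π]
  simp

private lemma probOf_ZN (hq : ∀ w, IsPMF (q w)) (f0 : Fin N → 𝓩) :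
    probOf (fun ωf : 𝓦 × (Fin (N+1) → 𝓩) => π ωf.1 * ∏ i, q ωf.1 (ωf.2 i))
      (fun ωf => fun i : Fin N => ωf.2 i.castSucc) f0 = Pz π q N f0 := by
  rw [probOf_std]
  have hw : ∀ w, (∑ f : Fin N → 𝓩, ∑ z,
      if (fun i : Fin N => (Fin.snoc f z : Fin (N+1) → 𝓩) i.castSucc) = f0
        then π w * ((∏ i, q w (f i)) * q w z) else 0)
      = π w * ∏ i, q w (f0 i) := by
    intro w
    rw [Finset.sum_congr rfl fun f (_ : f ∈ univ) => by
      rw [show (∑ z, if (fun i : Fin N => (Fin.snoc f z : Fin (N+1) → 𝓩) i.castSucc) = f0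
          then π w * ((∏ i, q w (f i)) * q w z) else 0)
        = if f = f0 then π w * ∏ i, q w (f i) else 0 from by
          rw [Finset.sum_congr rfl fun z (_ : z ∈ univ) => by rw [prefix_snoc]]
          split_ifs with h
          · rw [Finset.sum_congr rfl fun z (_ : z ∈ univ) =>
              show (π w * ((∏ i, q w (f i)) * q w z)) = (π w * ∏ i, q w (f i)) * q w z by ring,
              ← Finset.mul_sum, (hq w).2, mul_one]
          · simp],
      Finset.sum_ite_eq' univ f0 fun f => π w * ∏ i, q w (f i)]
    simp
  rw [Finset.sum_congr rfl fun w (_ : w ∈ univ) => hw w]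
  rfl

private lemma probOf_WZN (f0 : Fin N → 𝓩) (w0 : 𝓦) (hq : ∀ w, IsPMF (q w)) :
    probOf (fun ωf : 𝓦 × (Fin (N+1) → 𝓩) => π ωf.1 * ∏ i, q ωf.1 (ωf.2 i))
      (fun ωf => (ωf.1, fun i : Fin N => ωf.2 i.castSucc)) (w0, f0)
      = π w0 * ∏ i, q w0 (f0 i) := by
  rw [probOf_std]
  simp only [prefix_snoc, Prod.mk.injEq, ite_and]
  have hw : ∀ w, (∑ f : Fin N → 𝓩, ∑ z,
      if w = w0 then (if f = f0 then π w * ((∏ i, q w (f i)) * q w z) else 0) else 0)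
      = if w = w0 then π w * ∏ i, q w (f0 i) else 0 := by
    intro w
    split_ifs with h1
    · have hf : ∀ f : Fin N → 𝓩,
          (∑ z, if f = f0 then π w * ((∏ i, q w (f i)) * q w z) else 0)
          = if f = f0 then π w * ∏ i, q w (f i) else 0 := by
        intro f
        split_ifs with h2
        · rw [Finset.sum_congr rfl fun z (_ : z ∈ univ) =>
            show (π w * ((∏ i, q w (f i)) * q w z)) = (π w * ∏ i, q w (f i)) * q w z by ring,
            ← Finset.mul_sum, (hq w).2, mul_one]
        · simp
      rw [Finset.sum_congr rfl fun f (_ : f ∈ univ) => hf f,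
        Finset.sum_ite_eq' univ f0 fun f => π w * ∏ i, q w (f i)]
      simp
    · simp
  rw [Finset.sum_congr rfl fun w (_ : w ∈ univ) => hw w,
    Finset.sum_ite_eq' univ w0 fun w => π w * ∏ i, q w (f0 i)]
  simp

private lemma probOf_ZZN (hq : ∀ w, IsPMF (q w)) (f0 : Fin N → 𝓩) (z0 : 𝓩) :
    probOf (fun ωf : 𝓦 × (Fin (N+1) → 𝓩) => π ωf.1 * ∏ i, q ωf.1 (ωf.2 i))
      (fun ωf => (ωf.2 (Fin.last N), fun i : Fin N => ωf.2 i.castSucc)) (z0, f0)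
      = Pz π q (N+1) (Fin.snoc f0 z0) := by
  rw [probOf_std, Pz_snoc]
  simp only [prefix_snoc, Fin.snoc_last, Prod.mk.injEq, ite_and]
  refine Finset.sum_congr rfl fun w _ => ?_
  have hf : ∀ f : Fin N → 𝓩,
      (∑ z, if z = z0 then (if f = f0 then π w * ((∏ i, q w (f i)) * q w z) else 0) else 0)
      = if f = f0 then π w * ((∏ i, q w (f i)) * q w z0) else 0 := by
    intro f
    rw [Finset.sum_ite_eq' univ z0
      fun z => if f = f0 then π w * ((∏ i, q w (f i)) * q w z) else 0]
    simp
  rw [Finset.sum_congr rfl fun f (_ : f ∈ univ) => hf f,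
    Finset.sum_ite_eq' univ f0 fun f => π w * ((∏ i, q w (f i)) * q w z0)]
  simp

private lemma probOf_WZZN (hq : ∀ w, IsPMF (q w)) (f0 : Fin N → 𝓩) (z0 : 𝓩) (w0 : 𝓦) :
    probOf (fun ωf : 𝓦 × (Fin (N+1) → 𝓩) => π ωf.1 * ∏ i, q ωf.1 (ωf.2 i))
      (fun ωf => ((ωf.1, ωf.2 (Fin.last N)), fun i : Fin N => ωf.2 i.castSucc)) ((w0, z0), f0)
      = π w0 * ((∏ i, q w0 (f0 i)) * q w0 z0) := by
  rw [probOf_std]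
  simp only [prefix_snoc, Fin.snoc_last, Prod.mk.injEq, ite_and]
  have hw : ∀ w, (∑ f : Fin N → 𝓩, ∑ z,
      if w = w0 then (if z = z0 then (if f = f0 then π w * ((∏ i, q w (f i)) * q w z) else 0)
        else 0) else 0)
      = if w = w0 then π w * ((∏ i, q w (f0 i)) * q w z0) else 0 := by
    intro w
    split_ifs with h1
    · have hf : ∀ f : Fin N → 𝓩,
          (∑ z, if z = z0 then (if f = f0 then π w * ((∏ i, q w (f i)) * q w z) else 0) else 0)
          = if f = f0 then π w * ((∏ i, q w (f i)) * q w z0) else 0 := by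
        intro f
        rw [Finset.sum_ite_eq' univ z0
          fun z => if f = f0 then π w * ((∏ i, q w (f i)) * q w z) else 0]
        simp
      rw [Finset.sum_congr rfl fun f (_ : f ∈ univ) => hf f,
        Finset.sum_ite_eq' univ f0 fun f => π w * ((∏ i, q w (f i)) * q w z0)]
      simp
    · simp
  rw [Finset.sum_congr rfl fun w (_ : w ∈ univ) => hw w,
    Finset.sum_ite_eq' univ w0 fun w => π w * ((∏ i, q w (f0 i)) * q w z0)]
  simp

private lemma e_W (hq : ∀ w, IsPMF (q w)) :
    entropy (fun ωf : 𝓦 × (Fin (N+1) → 𝓩) => π ωf.1 * ∏ i, q ωf.1 (ωf.2 i))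
      (fun ωf => ωf.1) = -∑ w, π w * Real.log (π w) := by
  unfold entropy
  rw [Finset.sum_congr rfl fun w0 (_ : w0 ∈ univ) => by rw [probOf_W π q N hq w0]]

private lemma e_ZN (hq : ∀ w, IsPMF (q w)) :
    entropy (fun ωf : 𝓦 × (Fin (N+1) → 𝓩) => π ωf.1 * ∏ i, q ωf.1 (ωf.2 i))
      (fun ωf => fun i : Fin N => ωf.2 i.castSucc) = -(sS π q N) := by
  unfold entropy
  rw [Finset.sum_congr rfl fun f0 (_ : f0 ∈ univ) => by rw [probOf_ZN π q N hq f0]]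
  rfl

private lemma e_WZN (hπ : IsPMF π) (hq : ∀ w, IsPMF (q w)) :
    entropy (fun ωf : 𝓦 × (Fin (N+1) → 𝓩) => π ωf.1 * ∏ i, q ωf.1 (ωf.2 i))
      (fun ωf => (ωf.1, fun i : Fin N => ωf.2 i.castSucc))
      = -((∑ w, π w * Real.log (π w))
          + (N : ℝ) * (∑ w, π w * ∑ z, q w z * Real.log (q w z))) := by
  unfold entropy
  rw [Fintype.sum_prod_type]
  rw [Finset.sum_congr rfl fun w0 (_ : w0 ∈ univ) => Finset.sum_congr rfl
    fun f0 (_ : f0 ∈ univ) => by rw [probOf_WZN π q N f0 w0 hq]]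
  rw [sum_J_log π q hπ hq N]

private lemma e_ZZN (hq : ∀ w, IsPMF (q w)) :
    entropy (fun ωf : 𝓦 × (Fin (N+1) → 𝓩) => π ωf.1 * ∏ i, q ωf.1 (ωf.2 i))
      (fun ωf => (ωf.2 (Fin.last N), fun i : Fin N => ωf.2 i.castSucc))
      = -(sS π q (N+1)) := by
  unfold entropy
  rw [Fintype.sum_prod_type]
  rw [Finset.sum_congr rfl fun z0 (_ : z0 ∈ univ) => Finset.sum_congr rfl
    fun f0 (_ : f0 ∈ univ) => by rw [probOf_ZZN π q N hq f0 z0]]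
  rw [Finset.sum_comm]
  rw [show sS π q (N+1) = ∑ g : Fin (N+1) → 𝓩, Pz π q (N+1) g * Real.log (Pz π q (N+1) g)
      from rfl,
    sum_snoc N fun g => Pz π q (N+1) g * Real.log (Pz π q (N+1) g)]

private lemma e_WZZN (hπ : IsPMF π) (hq : ∀ w, IsPMF (q w)) :
    entropy (fun ωf : 𝓦 × (Fin (N+1) → 𝓩) => π ωf.1 * ∏ i, q ωf.1 (ωf.2 i))
      (fun ωf => ((ωf.1, ωf.2 (Fin.last N)), fun i : Fin N => ωf.2 i.castSucc))
      = -((∑ w, π w * Real.log (π w))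
          + ((N : ℝ) + 1) * (∑ w, π w * ∑ z, q w z * Real.log (q w z))) := by
  unfold entropy
  rw [Fintype.sum_prod_type, Fintype.sum_prod_type]
  rw [Finset.sum_congr rfl fun w0 (_ : w0 ∈ univ) => Finset.sum_congr rfl
    fun z0 (_ : z0 ∈ univ) => Finset.sum_congr rfl
      fun f0 (_ : f0 ∈ univ) => by rw [probOf_WZZN π q N hq f0 z0 w0]]
  rw [Finset.sum_congr rfl fun w0 (_ : w0 ∈ univ) => Finset.sum_comm]
  have hg : ∀ w0, ∑ f0 : Fin N → 𝓩, ∑ z0,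
      (π w0 * ((∏ i, q w0 (f0 i)) * q w0 z0))
        * Real.log (π w0 * ((∏ i, q w0 (f0 i)) * q w0 z0))
      = ∑ g : Fin (N+1) → 𝓩, (π w0 * ∏ i, q w0 (g i)) * Real.log (π w0 * ∏ i, q w0 (g i)) := by
    intro w0
    rw [sum_snoc N fun g => (π w0 * ∏ i, q w0 (g i)) * Real.log (π w0 * ∏ i, q w0 (g i))]
    refine Finset.sum_congr rfl fun f _ => Finset.sum_congr rfl fun z _ => ?_
    rw [prod_snoc]
  rw [Finset.sum_congr rfl fun w0 (_ : w0 ∈ univ) => hg w0, sum_J_log π q hπ hq (N+1)]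
  push_cast
  ring_nf

end XR

/-- Lemma 1 (Xu–Raginsky): under the conditionally i.i.d. model,
`I(W; Z | Z^N) ≤ (1/N) I(W; Z^N)`. -/
theorem cmi_le_mi_div_N {𝓦 𝓩 : Type*} [Fintype 𝓦] [DecidableEq 𝓦] [Fintype 𝓩] [DecidableEq 𝓩]
    (N : ℕ) (hN : 1 ≤ N) (π : 𝓦 → ℝ) (q : 𝓦 → 𝓩 → ℝ)
    (hπ : IsPMF π) (hq : ∀ w, IsPMF (q w))
    (p : 𝓦 × (Fin (N + 1) → 𝓩) → ℝ)
    (hp : p = fun ωf => π ωf.1 * ∏ i, q ωf.1 (ωf.2 i)) :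
    condMI p (fun ωf => ωf.1) (fun ωf => ωf.2 (Fin.last N))
        (fun ωf => fun i : Fin N => ωf.2 i.castSucc)
      ≤ (1 / (N : ℝ)) * mutualInfo p (fun ωf => ωf.1) (fun ωf => fun i : Fin N => ωf.2 i.castSucc) := by
  subst hp
  simp only [condMI, condEntropy, mutualInfo]
  rw [e_W π q N hq, e_ZN π q N hq, e_WZN π q N hπ hq, e_ZZN π q N hq, e_WZZN π q N hπ hq]
  have key := han π q hπ hq N
  have hNpos : (0 : ℝ) < N := by exact_mod_cast Nat.lt_of_lt_of_le Nat.zero_lt_one hN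
  rw [one_div, inv_mul_eq_div, le_div_iff₀ hNpos]
  ring_nf
  ring_nf at key
  nlinarith [key]
end
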